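/- arXiv:math/0311481 — 4 statements merged into one kernel-verified Lean document; each statement's English description precedes it below -/
import Mathlib

section
/- For every dimension d ≥ 1 and every exponent α > 0 there is a constant C = C(d) > 0 with the following property: for every n ≥ 1, every family of points v_1, …, v_n ∈ [0,1]^d, and every minimal spanning tree T over v_1, …, v_n, one has E_α(T) = Σ_{{i,j} ∈ E(T)} ‖v_i − v_j‖^α ≤ C^α · n^{max(0, 1 − α/d)}. -/
/-- The `α`-energy of a graph `T` on vertex set `Fin n`, with vertex `i` placed at
`v i` in the metric space `X`: the sum over the edges `{i,j}` of `T` of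
`dist (v i) (v j) ^ α`. -/
noncomputable def energy {X : Type*} [MetricSpace X] {n : ℕ} (v : Fin n → X)
    (T : SimpleGraph (Fin n)) (α : ℝ) : ℝ :=
  ∑ e ∈ T.edgeSet.toFinite.toFinset,
    Sym2.lift ⟨fun i j => dist (v i) (v j) ^ α, fun i j => by simp only [dist_comm]⟩ e

/-- `T` is a minimal spanning tree over the points `v 0, …, v (n-1)`: it is a tree on
the vertex set `Fin n` minimizing the total edge length `E₁` among all such trees. -/
def IsMST {X : Type*} [MetricSpace X] {n : ℕ} (v : Fin n → X)
    (T : SimpleGraph (Fin n)) : Prop :=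
  T.IsTree ∧ ∀ T' : SimpleGraph (Fin n), T'.IsTree → energy v T 1 ≤ energy v T' 1

open SimpleGraph

open SimpleGraph

variable {V : Type*}

private lemma walk_reach_cases (G : SimpleGraph V) (a b : V) {x y : V} (p : G.Walk x y) :
    (G.deleteEdges {s(a,b)}).Reachable x y ∨
    ((G.deleteEdges {s(a,b)}).Reachable x a ∧ (G.deleteEdges {s(a,b)}).Reachable y b) ∨
    ((G.deleteEdges {s(a,b)}).Reachable x b ∧ (G.deleteEdges {s(a,b)}).Reachable y a) := by
  set D := G.deleteEdges {s(a,b)} with hD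
  induction p with
  | nil => exact Or.inl (Reachable.refl _)
  | @cons x z y hadj p ih =>
    by_cases he : s(x, z) = s(a, b)
    · rw [Sym2.eq_iff] at he
      rcases he with ⟨rfl, rfl⟩ | ⟨rfl, rfl⟩
      · -- x = a, z = b
        rcases ih with h | ⟨h1, h2⟩ | ⟨h1, h2⟩
        · exact Or.inr (Or.inl ⟨Reachable.refl _, h.symm⟩)
        · exact Or.inl (h1.symm.trans h2.symm)
        · exact Or.inl h2.symm
      · -- x = b, z = a
        rcases ih with h | ⟨h1, h2⟩ | ⟨h1, h2⟩
        · exact Or.inr (Or.inr ⟨Reachable.refl _, h.symm⟩)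
        · exact Or.inl h2.symm
        · exact Or.inl (h1.symm.trans h2.symm)
    · have hDadj : D.Adj x z := by
        rw [hD, deleteEdges_adj]
        exact ⟨hadj, by simpa using he⟩
      rcases ih with h | ⟨h1, h2⟩ | ⟨h1, h2⟩
      · exact Or.inl (hDadj.reachable.trans h)
      · exact Or.inr (Or.inl ⟨hDadj.reachable.trans h1, h2⟩)
      · exact Or.inr (Or.inr ⟨hDadj.reachable.trans h1, h2⟩)

private lemma reach_endpoint {G : SimpleGraph V} (hc : G.Connected) (a b x : V) :
    (G.deleteEdges {s(a,b)}).Reachable x a ∨ (G.deleteEdges {s(a,b)}).Reachable x b := by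
  obtain ⟨p⟩ := hc x a
  rcases walk_reach_cases G a b p with h | ⟨h1, _⟩ | ⟨h1, _⟩
  · exact Or.inl h
  · exact Or.inl h1
  · exact Or.inr h1

private lemma tree_edge_not_reach {G : SimpleGraph V} (hT : G.IsTree) {a b : V}
    (hab : G.Adj a b) : ¬ (G.deleteEdges {s(a,b)}).Reachable a b := by
  have := isAcyclic_iff_forall_adj_isBridge.mp hT.IsAcyclic hab
  rw [isBridge_iff] at this
  exact this

private lemma swap_isTree {G : SimpleGraph V} (hT : G.IsTree) {a b u w : V} (hab : G.Adj a b)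
    (hsep : ¬ (G.deleteEdges {s(a,b)}).Reachable u w) :
    ((G.deleteEdges {s(a,b)}) ⊔ fromEdgeSet {s(u,w)}).IsTree := by
  classical
  set D := G.deleteEdges {s(a,b)} with hD
  set T' := D ⊔ fromEdgeSet {s(u,w)} with hT'
  have hne : u ≠ w := by rintro rfl; exact hsep (Reachable.refl _)
  have hDle : D ≤ T' := le_sup_left
  have huw : T'.Adj u w := by
    exact (sup_adj _ _ _ _).mpr (Or.inr (by rw [fromEdgeSet_adj]; exact ⟨rfl, hne⟩))
  -- connectivity
  have hreach : ∀ x : V, D.Reachable x a ∨ D.Reachable x b :=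
    fun x => reach_endpoint hT.isConnected a b x
  have hab' : T'.Reachable a b := by
    rcases hreach u with hu | hu <;> rcases hreach w with hw | hw
    · exact absurd (hu.trans hw.symm) hsep
    · exact ((hu.mono hDle).symm.trans (huw.reachable.trans (hw.mono hDle)))
    · exact ((hw.mono hDle).symm.trans (huw.symm.reachable.trans (hu.mono hDle)))
    · exact absurd (hu.trans hw.symm) hsep
  have hconn : T'.Connected := by
    have hne' : Nonempty V := hT.isConnected.nonempty
    rw [connected_iff]
    refine ⟨fun x y => ?_, hne'⟩
    rcases hreach x with hx | hx <;> rcases hreach y with hy | hy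
    · exact (hx.mono hDle).trans (hy.mono hDle).symm
    · exact (hx.mono hDle).trans (hab'.trans (hy.mono hDle).symm)
    · exact (hx.mono hDle).trans (hab'.symm.trans (hy.mono hDle).symm)
    · exact (hx.mono hDle).trans (hy.mono hDle).symm
  refine ⟨hconn, ?_⟩
  -- acyclicity
  intro x c hc
  by_cases hmem : s(u, w) ∈ c.edges
  · have h2 : (T' \ fromEdgeSet {s(u,w)}).Reachable u w :=
      (adj_and_reachable_delete_edges_iff_exists_cycle.mpr ⟨x, c, hc, hmem⟩).2
    have hle : T' \ fromEdgeSet {s(u,w)} ≤ D := by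
      intro p q hpq
      rw [sdiff_adj] at hpq
      rcases (sup_adj _ _ _ _).mp hpq.1 with h | h
      · exact h
      · exact absurd h hpq.2
    exact hsep (h2.mono hle)
  · have hsub : ∀ e ∈ c.edges, e ∈ G.edgeSet := by
      intro e hec
      have : e ∈ T'.edgeSet := c.edges_subset_edgeSet hec
      rw [hT', edgeSet_sup, edgeSet_fromEdgeSet] at this
      rcases this with h | h
      · rw [hD, edgeSet_deleteEdges] at h
        exact h.1
      · exact absurd h.1 (by rintro rfl; exact hmem hec)
    have hc' : (c.transfer G hsub).IsCycle := hc.transfer hsub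
    exact hT.IsAcyclic _ hc'

private lemma swap_edgeSet {G : SimpleGraph V} {a b u w : V}
    (hne : u ≠ w) :
    ((G.deleteEdges {s(a,b)}) ⊔ fromEdgeSet {s(u,w)}).edgeSet
      = insert s(u,w) (G.edgeSet \ {s(a,b)}) := by
  rw [edgeSet_sup, edgeSet_deleteEdges, edgeSet_fromEdgeSet]
  ext e
  simp only [Set.mem_union, Set.mem_diff, Set.mem_singleton_iff, Set.mem_insert_iff,
    Set.mem_setOf_eq]
  constructor
  · rintro (h | ⟨rfl, _⟩)
    · exact Or.inr h
    · exact Or.inl rfl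
  · rintro (rfl | h)
    · exact Or.inr ⟨rfl, by simp [Sym2.mk_isDiag_iff, hne]⟩
    · exact Or.inl h


section Energy
variable {X : Type*} [MetricSpace X] {n : ℕ}

private noncomputable def len (v : Fin n → X) : Sym2 (Fin n) → ℝ :=
  Sym2.lift ⟨fun i j => dist (v i) (v j), fun i j => by simp only [_root_.dist_comm]⟩

private lemma len_mk (v : Fin n → X) (i j : Fin n) : len v s(i,j) = dist (v i) (v j) := rfl

private lemma len_nonneg (v : Fin n → X) (e : Sym2 (Fin n)) : 0 ≤ len v e := by
  induction e using Sym2.ind with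
  | _ i j => exact dist_nonneg

private lemma energy_eq (v : Fin n → X) (T : SimpleGraph (Fin n)) (α : ℝ) :
    energy v T α = ∑ e ∈ T.edgeSet.toFinite.toFinset, (len v e) ^ α := by
  unfold energy
  refine Finset.sum_congr rfl fun e _ => ?_
  induction e using Sym2.ind with
  | _ i j => rfl

-- the exchange/cut lemma for MSTs
private lemma mst_cut {v : Fin n → X} {T : SimpleGraph (Fin n)} (hM : IsMST v T)
    {a b u w : Fin n} (hab : T.Adj a b)
    (hsep : ¬ (T.deleteEdges {s(a,b)}).Reachable u w) :
    dist (v a) (v b) ≤ dist (v u) (v w) := by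
  classical
  have hne : u ≠ w := fun h => hsep (h ▸ Reachable.refl _)
  have htree' : ((T.deleteEdges {s(a,b)}) ⊔ fromEdgeSet {s(u,w)}).IsTree :=
    swap_isTree hM.1 hab hsep
  have hE := hM.2 _ htree'
  have hAB : s(a,b) ∈ T.edgeSet.toFinite.toFinset := by
    rw [Set.Finite.mem_toFinset, mem_edgeSet]; exact hab
  have hUW : s(u,w) ∉ (T.edgeSet.toFinite.toFinset.erase s(a,b)) := by
    intro h
    rw [Finset.mem_erase, Set.Finite.mem_toFinset, mem_edgeSet] at h
    refine hsep (Adj.reachable ?_)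
    rw [deleteEdges_adj]
    exact ⟨h.2, by simpa using h.1⟩
  have hset : ((T.deleteEdges {s(a,b)}) ⊔ fromEdgeSet {s(u,w)}).edgeSet.toFinite.toFinset
      = insert s(u,w) (T.edgeSet.toFinite.toFinset.erase s(a,b)) := by
    ext e
    rw [Set.Finite.mem_toFinset, swap_edgeSet hne, Finset.mem_insert, Finset.mem_erase,
      Set.mem_insert_iff, Set.mem_diff, Set.Finite.mem_toFinset, Set.mem_singleton_iff]
    tauto
  rw [energy_eq, energy_eq, hset, Finset.sum_insert hUW,
    ← Finset.add_sum_erase _ _ hAB, add_le_add_iff_right] at hE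
  simpa [len_mk, Real.rpow_one] using hE

end Energy

section Struct
variable {X : Type*} [MetricSpace X] {n : ℕ} {v : Fin n → X} {T : SimpleGraph (Fin n)}

private lemma mst_edge_far (hM : IsMST v T) {c d : Fin n} (hcd : T.Adj c d) (u : Fin n) :
    dist (v c) (v d) ≤ dist (v u) (v c) ∨ dist (v c) (v d) ≤ dist (v u) (v d) := by
  rcases reach_endpoint hM.1.isConnected c d u with h | h
  · right
    refine mst_cut hM hcd fun h2 => ?_
    exact tree_edge_not_reach hM.1 hcd (h.symm.trans h2)
  · left
    refine mst_cut hM hcd fun h2 => ?_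
    exact tree_edge_not_reach hM.1 hcd (h2.symm.trans h)

private lemma mst_edge_pair_half (hM : IsMST v T) {a b c d : Fin n}
    (hab : T.Adj a b) (hcd : T.Adj c d) (hef : s(c,d) ≠ s(a,b)) :
    (dist (v a) (v b) ≤ dist (v a) (v c) ∧ dist (v a) (v b) ≤ dist (v a) (v d)) ∨
    (dist (v a) (v b) ≤ dist (v b) (v c) ∧ dist (v a) (v b) ≤ dist (v b) (v d)) := by
  have hDcd : (T.deleteEdges {s(a,b)}).Adj c d := by
    rw [deleteEdges_adj]
    exact ⟨hcd, by simpa using hef⟩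
  have hnr := tree_edge_not_reach hM.1 hab
  rcases reach_endpoint hM.1.isConnected a b c with h | h
  · -- c reaches a in T - ab
    right
    have h1 : ¬ (T.deleteEdges {s(a,b)}).Reachable b c :=
      fun h2 => hnr (h2.trans h).symm
    have h2 : ¬ (T.deleteEdges {s(a,b)}).Reachable b d :=
      fun h2 => h1 (h2.trans hDcd.symm.reachable)
    exact ⟨mst_cut hM hab h1, mst_cut hM hab h2⟩
  · -- c reaches b
    left
    have h1 : ¬ (T.deleteEdges {s(a,b)}).Reachable a c :=
      fun h2 => hnr (h2.trans h)
    have h2 : ¬ (T.deleteEdges {s(a,b)}).Reachable a d :=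
      fun h2 => h1 (h2.trans hDcd.symm.reachable)
    exact ⟨mst_cut hM hab h1, mst_cut hM hab h2⟩

private lemma mst_edge_pair (hM : IsMST v T) {e f : Sym2 (Fin n)}
    (he : e ∈ T.edgeSet) (hf : f ∈ T.edgeSet) (hef : e ≠ f) :
    ∃ a b c d : Fin n, e = s(a,b) ∧ f = s(c,d) ∧
      len v e ≤ dist (v a) (v c) ∧ len v e ≤ dist (v a) (v d) ∧
      len v f ≤ dist (v c) (v a) ∧ len v f ≤ dist (v c) (v b) := by
  induction e using Sym2.ind with | _ a₀ b₀ =>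
  induction f using Sym2.ind with | _ c₀ d₀ =>
  rw [mem_edgeSet] at he hf
  have h1 := mst_edge_pair_half hM he hf hef.symm
  have h2 := mst_edge_pair_half hM hf he hef
  rw [len_mk, len_mk]
  rcases h1 with ⟨g1, g2⟩ | ⟨g1, g2⟩ <;> rcases h2 with ⟨k1, k2⟩ | ⟨k1, k2⟩
  · exact ⟨a₀, b₀, c₀, d₀, rfl, rfl, g1, g2, k1, k2⟩
  · exact ⟨a₀, b₀, d₀, c₀, rfl, Sym2.eq_swap.symm, g2, g1, k1, k2⟩
  · exact ⟨b₀, a₀, c₀, d₀, Sym2.eq_swap.symm, rfl, g1, g2, k2, k1⟩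
  · exact ⟨b₀, a₀, d₀, c₀, Sym2.eq_swap.symm, Sym2.eq_swap.symm, g2, g1, k2, k1⟩

end Struct

section Geom

open Metric MeasureTheory
open scoped ENNReal

variable {d : ℕ}

private lemma euclidean_norm_le (hd : 1 ≤ d) {y : EuclideanSpace ℝ (Fin d)} {c : ℝ}
    (hc : 0 ≤ c) (h : ∀ i, |y i| ≤ c) : ‖y‖ ≤ Real.sqrt d * c := by
  rw [EuclideanSpace.norm_eq]
  have h1 : ∑ i, ‖y i‖ ^ 2 ≤ (d : ℝ) * c ^ 2 := by
    calc ∑ i, ‖y i‖ ^ 2 ≤ ∑ _i : Fin d, c ^ 2 := by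
          refine Finset.sum_le_sum fun i _ => ?_
          have := h i
          rw [Real.norm_eq_abs]
          nlinarith [abs_nonneg (y i)]
      _ = (d : ℝ) * c ^ 2 := by
          rw [Finset.sum_const, Finset.card_univ, Fintype.card_fin, nsmul_eq_mul]
  calc Real.sqrt (∑ i, ‖y i‖ ^ 2) ≤ Real.sqrt ((d : ℝ) * c ^ 2) := Real.sqrt_le_sqrt h1
    _ = Real.sqrt d * c := by
        rw [Real.sqrt_mul (Nat.cast_nonneg d), Real.sqrt_sq_eq_abs, abs_of_nonneg hc]

private lemma nontrivial_euclidean (hd : 1 ≤ d) : Nontrivial (EuclideanSpace ℝ (Fin d)) := by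
  have : 0 < Module.finrank ℝ (EuclideanSpace ℝ (Fin d)) := by
    rw [finrank_euclideanSpace_fin]; omega
  exact Module.nontrivial_of_finrank_pos (R := ℝ) this

private lemma pack (hd : 1 ≤ d) {P : Finset (EuclideanSpace ℝ (Fin d))}
    {x₀ : EuclideanSpace ℝ (Fin d)} {r R : ℝ} (hr : 0 < r) (hR : 0 ≤ R)
    (hsep : ∀ p ∈ P, ∀ q ∈ P, p ≠ q → r ≤ dist p q)
    (hin : ∀ p ∈ P, dist p x₀ ≤ R) :
    (P.card : ℝ) * (r / 2) ^ d ≤ (R + r / 2) ^ d := by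
  haveI := nontrivial_euclidean hd
  have hdisj : (↑P : Set (EuclideanSpace ℝ (Fin d))).PairwiseDisjoint
      (fun p => ball p (r / 2)) := by
    intro p hp q hq hpq
    exact ball_disjoint_ball (by linarith [hsep p hp q hq hpq])
  have hmeas := measure_biUnion_finset (μ := volume) hdisj
    (fun p _ => measurableSet_ball (x := p) (ε := r / 2))
  have hsub : (⋃ p ∈ P, ball p (r / 2)) ⊆ ball x₀ (R + r / 2) := by
    intro y hy
    simp only [Set.mem_iUnion] at hy
    obtain ⟨p, hp, hyp⟩ := hy
    rw [Metric.mem_ball] at hyp ⊢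
    calc dist y x₀ ≤ dist y p + dist p x₀ := dist_triangle _ _ _
      _ < R + r / 2 := by have := hin p hp; linarith
  have hle : ∑ p ∈ P, volume (ball p (r / 2)) ≤ volume (ball x₀ (R + r / 2)) := by
    rw [← hmeas]
    exact measure_mono hsub
  have hball : ∀ x : EuclideanSpace ℝ (Fin d), ∀ s : ℝ, 0 ≤ s →
      volume (ball x s) = ENNReal.ofReal (s ^ d)
        * volume (ball (0 : EuclideanSpace ℝ (Fin d)) 1) := by
    intro x s hs
    rw [Measure.addHaar_ball volume x hs, finrank_euclideanSpace_fin]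
  rw [Finset.sum_congr rfl (fun p _ => hball p (r/2) (by linarith)),
    hball x₀ (R + r/2) (by linarith), Finset.sum_const, nsmul_eq_mul, ← mul_assoc] at hle
  have hc0 : volume (ball (0 : EuclideanSpace ℝ (Fin d)) 1) ≠ 0 :=
    (measure_ball_pos volume _ one_pos).ne'
  have hctop : volume (ball (0 : EuclideanSpace ℝ (Fin d)) 1) ≠ ⊤ :=
    measure_ball_lt_top.ne
  rw [ENNReal.mul_le_mul_iff_left hc0 hctop] at hle
  have : ENNReal.ofReal ((P.card : ℝ) * (r / 2) ^ d) ≤ ENNReal.ofReal ((R + r / 2) ^ d) := by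
    rw [ENNReal.ofReal_mul (by positivity)]
    simpa [ENNReal.ofReal_natCast] using hle
  rw [ENNReal.ofReal_le_ofReal_iff (by positivity)] at this
  exact this

open scoped Classical in
private lemma overlap_sum {ι : Type*} (I : Finset ι) (c : ι → EuclideanSpace ℝ (Fin d))
    (r : ι → ℝ) (K : ℕ) (x₀ : EuclideanSpace ℝ (Fin d)) (R₀ : ℝ)
    (hsub : ∀ i ∈ I, ball (c i) (r i) ⊆ ball x₀ R₀)
    (hover : ∀ x : EuclideanSpace ℝ (Fin d),
      (I.filter (fun i => x ∈ ball (c i) (r i))).card ≤ K) :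
    ∑ i ∈ I, volume (ball (c i) (r i)) ≤ (K : ℝ≥0∞) * volume (ball x₀ R₀) := by
  classical
  have h1 : ∀ i ∈ I, volume (ball (c i) (r i))
      = ∫⁻ x, (ball (c i) (r i)).indicator (fun _ => (1:ℝ≥0∞)) x := by
    intro i _
    rw [lintegral_indicator_const measurableSet_ball, one_mul]
  rw [Finset.sum_congr rfl h1, ← lintegral_finset_sum _
    (fun i _ => (measurable_const.indicator measurableSet_ball))]
  have h2 : ∀ x, ∑ i ∈ I, (ball (c i) (r i)).indicator (fun _ => (1:ℝ≥0∞)) x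
      ≤ (ball x₀ R₀).indicator (fun _ => (K : ℝ≥0∞)) x := by
    intro x
    by_cases hx : x ∈ ball x₀ R₀
    · rw [Set.indicator_of_mem hx]
      have : ∑ i ∈ I, (ball (c i) (r i)).indicator (fun _ => (1:ℝ≥0∞)) x
          = ((I.filter (fun i => x ∈ ball (c i) (r i))).card : ℝ≥0∞) := by
        rw [← Finset.sum_boole]
        refine Finset.sum_congr rfl fun i _ => ?_
        by_cases h : x ∈ ball (c i) (r i) <;> simp [h]
      rw [this]
      exact_mod_cast Nat.cast_le.mpr (hover x)
    · rw [Set.indicator_of_notMem hx]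
      have : ∀ i ∈ I, (ball (c i) (r i)).indicator (fun _ => (1:ℝ≥0∞)) x = 0 := by
        intro i hi
        exact Set.indicator_of_notMem (fun h => hx (hsub i hi h)) _
      rw [Finset.sum_congr rfl this]
      simp
  calc ∫⁻ x, ∑ i ∈ I, (ball (c i) (r i)).indicator (fun _ => (1:ℝ≥0∞)) x
      ≤ ∫⁻ x, (ball x₀ R₀).indicator (fun _ => (K : ℝ≥0∞)) x := lintegral_mono h2
    _ = (K : ℝ≥0∞) * volume (ball x₀ R₀) := lintegral_indicator_const measurableSet_ball _

end Geom

section Main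

open Metric MeasureTheory
open scoped ENNReal Classical

variable {d n : ℕ}

private noncomputable def emid (v : Fin n → EuclideanSpace ℝ (Fin d)) :
    Sym2 (Fin n) → EuclideanSpace ℝ (Fin d) :=
  Sym2.lift ⟨fun i j => midpoint ℝ (v i) (v j), fun i j => midpoint_comm (v i) (v j)⟩

private lemma emid_mk (v : Fin n → EuclideanSpace ℝ (Fin d)) (i j : Fin n) :
    emid v s(i,j) = midpoint ℝ (v i) (v j) := rfl

variable {v : Fin n → EuclideanSpace ℝ (Fin d)} {T : SimpleGraph (Fin n)}

private lemma dist_le_sqrt (hd : 1 ≤ d) (hv : ∀ j i, v j i ∈ Set.Icc (0:ℝ) 1)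
    (i j : Fin n) : dist (v i) (v j) ≤ Real.sqrt d := by
  rw [dist_eq_norm]
  have := euclidean_norm_le hd (y := v i - v j) (c := 1) zero_le_one (fun k => by
    have h1 := hv i k
    have h2 := hv j k
    rw [Set.mem_Icc] at h1 h2
    rw [PiLp.sub_apply, abs_le]
    constructor <;> linarith)
  simpa using this

private lemma emid_norm_le (hd : 1 ≤ d) (hv : ∀ j i, v j i ∈ Set.Icc (0:ℝ) 1)
    (e : Sym2 (Fin n)) : ‖emid v e‖ ≤ Real.sqrt d := by
  induction e using Sym2.ind with | _ i j =>
  rw [emid_mk]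
  have := euclidean_norm_le hd (y := midpoint ℝ (v i) (v j)) (c := 1) zero_le_one (fun k => by
    rw [midpoint_eq_smul_add, PiLp.smul_apply, PiLp.add_apply]
    have h1 := hv i k
    have h2 := hv j k
    rw [Set.mem_Icc] at h1 h2
    rw [smul_eq_mul, abs_le, invOf_eq_inv]
    constructor <;> nlinarith)
  simpa using this

private lemma dist_emid_left (i j : Fin n) :
    dist (v i) (emid v s(i,j)) = dist (v i) (v j) / 2 := by
  rw [emid_mk, dist_left_midpoint]
  norm_num
  ring

private lemma dist_emid_right (i j : Fin n) :
    dist (v j) (emid v s(i,j)) = dist (v i) (v j) / 2 := by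
  rw [emid_mk, midpoint_comm, dist_left_midpoint, _root_.dist_comm (v j) (v i)]
  norm_num
  ring

private lemma vertex_far (hM : IsMST v T) {e : Sym2 (Fin n)} (he : e ∈ T.edgeSet)
    (u : Fin n) : len v e / 2 ≤ dist (v u) (emid v e) := by
  induction e using Sym2.ind with | _ c d' =>
  rw [mem_edgeSet] at he
  rw [len_mk]
  rcases mst_edge_far hM he u with h | h
  · have h1 : dist (v u) (v c) ≤ dist (v u) (emid v s(c,d')) + dist (v c) (emid v s(c,d')) := by
      rw [_root_.dist_comm (v c) (emid v s(c,d'))]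
      exact dist_triangle _ _ _
    have h2 := dist_emid_left (v := v) c d'
    linarith
  · have h1 : dist (v u) (v d') ≤ dist (v u) (emid v s(c,d')) + dist (v d') (emid v s(c,d')) := by
      rw [_root_.dist_comm (v d') (emid v s(c,d'))]
      exact dist_triangle _ _ _
    have h2 := dist_emid_right (v := v) c d'
    linarith

private lemma cross_scale (hM : IsMST v T) {e f : Sym2 (Fin n)}
    (he : e ∈ T.edgeSet) (hf : f ∈ T.edgeSet) {x : EuclideanSpace ℝ (Fin d)}
    (hxe : x ∈ ball (emid v e) (len v e / 16))
    (hxf : x ∈ ball (emid v f) (len v f / 16)) :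
    len v f ≤ 4 * len v e := by
  by_contra hcon
  push_neg at hcon
  induction e using Sym2.ind with | _ a b =>
  have hfar := vertex_far hM hf a
  have h1 : dist (v a) (emid v f) ≤ dist (v a) (emid v s(a,b))
      + dist (emid v s(a,b)) x + dist x (emid v f) := by
    calc dist (v a) (emid v f) ≤ dist (v a) x + dist x (emid v f) := dist_triangle _ _ _
      _ ≤ dist (v a) (emid v s(a,b)) + dist (emid v s(a,b)) x + dist x (emid v f) := by
          have := dist_triangle (v a) (emid v s(a,b)) x
          linarith
  rw [Metric.mem_ball] at hxe hxf
  rw [_root_.dist_comm] at hxe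
  have h2 := dist_emid_left (v := v) a b
  rw [len_mk] at hxe hcon
  have h0 := len_nonneg v f
  linarith

end Main

section Count

open Metric MeasureTheory
open scoped ENNReal Classical

variable {d n : ℕ} {v : Fin n → EuclideanSpace ℝ (Fin d)} {T : SimpleGraph (Fin n)}

private lemma overlap_count (hd : 1 ≤ d) (hM : IsMST v T) (x : EuclideanSpace ℝ (Fin d)) :
    (T.edgeSet.toFinite.toFinset.filter
        (fun e => x ∈ ball (emid v e) (len v e / 16))).card ≤ 37 ^ d * 37 ^ d := by
  set S := T.edgeSet.toFinite.toFinset.filter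
      (fun e => x ∈ ball (emid v e) (len v e / 16)) with hSdef
  have hSedge : ∀ f ∈ S, f ∈ T.edgeSet :=
    fun f hf => (Set.Finite.mem_toFinset _).mp (Finset.mem_filter.mp hf).1
  have hSball : ∀ f ∈ S, x ∈ ball (emid v f) (len v f / 16) :=
    fun f hf => (Finset.mem_filter.mp hf).2
  rcases S.eq_empty_or_nonempty with hSe | ⟨e₀, he₀⟩
  · rw [hSe]; simp
  set L := len v e₀ with hLdef
  have hL : 0 < L := by
    have h := hSball e₀ he₀
    rw [Metric.mem_ball] at h
    have := dist_nonneg (x := x) (y := emid v e₀)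
    linarith
  have hrat : ∀ f ∈ S, L ≤ 4 * len v f ∧ len v f ≤ 4 * L := fun f hf =>
    ⟨cross_scale hM (hSedge f hf) (hSedge e₀ he₀) (hSball f hf) (hSball e₀ he₀),
     cross_scale hM (hSedge e₀ he₀) (hSedge f hf) (hSball e₀ he₀) (hSball f hf)⟩
  set P := (Finset.univ.filter (fun i : Fin n => ∃ f ∈ S, i ∈ f)).image v with hPdef
  have hvP : ∀ (i : Fin n), (∃ f ∈ S, i ∈ f) → v i ∈ P :=
    fun i hi => Finset.mem_image_of_mem v (Finset.mem_filter.mpr ⟨Finset.mem_univ _, hi⟩)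
  have hPdist : ∀ p ∈ P, dist p x ≤ 9 * L / 4 := by
    intro p hp
    rw [hPdef, Finset.mem_image] at hp
    obtain ⟨i, hi, rfl⟩ := hp
    rw [Finset.mem_filter] at hi
    obtain ⟨-, f, hfS, hif⟩ := hi
    obtain ⟨j, rfl⟩ := Sym2.mem_iff_exists.mp hif
    have h1 : dist (v i) (emid v s(i,j)) = len v s(i,j) / 2 := by
      rw [len_mk]; exact dist_emid_left i j
    have h2 := hSball _ hfS
    rw [Metric.mem_ball] at h2
    have h3 := (hrat _ hfS).2
    have h4 := dist_triangle (v i) (emid v s(i,j)) x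
    have h5 : dist (emid v s(i,j)) x = dist x (emid v s(i,j)) := _root_.dist_comm _ _
    have h6 := len_nonneg v s(i,j)
    linarith
  obtain ⟨N, hNmem, hNmax⟩ := Finset.exists_max_image
    (P.powerset.filter (fun Q => ∀ p ∈ Q, ∀ q ∈ Q, p ≠ q → L/8 ≤ Dist.dist p q))
    Finset.card ⟨∅, by simp⟩
  rw [Finset.mem_filter, Finset.mem_powerset] at hNmem
  obtain ⟨hNP, hNsep⟩ := hNmem
  have hnear : ∀ p ∈ P, ∃ q, q ∈ N ∧ dist p q < L / 8 := by
    intro p hp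
    by_contra hcon
    push_neg at hcon
    have hpN : p ∉ N := by
      intro h
      have := hcon p h
      rw [_root_.dist_self] at this
      linarith
    have hins : insert p N ∈ P.powerset.filter
        (fun Q => ∀ p ∈ Q, ∀ q ∈ Q, p ≠ q → L/8 ≤ Dist.dist p q) := by
      rw [Finset.mem_filter, Finset.mem_powerset]
      refine ⟨Finset.insert_subset hp hNP, ?_⟩
      intro p1 hp1 p2 hp2 hne
      rcases Finset.mem_insert.mp hp1 with rfl | hp1' <;>
        rcases Finset.mem_insert.mp hp2 with rfl | hp2'
      · exact absurd rfl hne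
      · exact hcon p2 hp2'
      · rw [_root_.dist_comm]; exact hcon p1 hp1'
      · exact hNsep p1 hp1' p2 hp2' hne
    have := hNmax _ hins
    rw [Finset.card_insert_of_notMem hpN] at this
    omega
  set cl : EuclideanSpace ℝ (Fin d) → EuclideanSpace ℝ (Fin d) :=
    fun p => if h : ∃ q, q ∈ N ∧ dist p q < L/8 then h.choose else p with hcldef
  have hcl : ∀ p ∈ P, cl p ∈ N ∧ dist p (cl p) < L / 8 := by
    intro p hp
    have h := hnear p hp
    simp only [hcldef, dif_pos h]
    exact h.choose_spec
  have hNcard : N.card ≤ 37 ^ d := by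
    have hp := pack hd (P := N) (x₀ := x) (r := L/8) (R := 9*L/4)
      (by linarith) (by linarith) hNsep (fun p hp => hPdist p (hNP hp))
    have heq : (9*L/4 + L/8/2) = 37 * (L/16) := by ring
    have heq2 : L/8/2 = L/16 := by ring
    rw [heq, heq2, mul_pow] at hp
    have h16 : (0:ℝ) < (L/16)^d := by positivity
    have hle : (N.card : ℝ) ≤ 37 ^ d := le_of_mul_le_mul_right hp h16
    exact_mod_cast hle
  have hmaps : ∀ e ∈ S, Sym2.map (fun i => cl (v i)) e
      ∈ (N ×ˢ N).image (fun p => s(p.1, p.2)) := by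
    intro e heS
    induction e using Sym2.ind with | _ i j =>
    rw [Sym2.map_pair_eq]
    refine Finset.mem_image.mpr ⟨(cl (v i), cl (v j)), ?_, rfl⟩
    rw [Finset.mem_product]
    exact ⟨(hcl _ (hvP i ⟨s(i,j), heS, Sym2.mem_mk_left i j⟩)).1,
           (hcl _ (hvP j ⟨s(i,j), heS, Sym2.mem_mk_right i j⟩)).1⟩
  have hinj : Set.InjOn (Sym2.map (fun i => cl (v i))) ↑S := by
    intro e heS f hfS hmap
    by_contra hef
    rw [Finset.mem_coe] at heS hfS
    obtain ⟨a, b, c, d', hea, hfc, h1, h2, h3, h4⟩ :=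
      mst_edge_pair hM (hSedge e heS) (hSedge f hfS) hef
    have hLe := (hrat e heS).1
    have hva : v a ∈ P := hvP a ⟨e, heS, by rw [hea]; exact Sym2.mem_mk_left a b⟩
    have hvc : v c ∈ P := hvP c ⟨f, hfS, by rw [hfc]; exact Sym2.mem_mk_left c d'⟩
    have hvd : v d' ∈ P := hvP d' ⟨f, hfS, by rw [hfc]; exact Sym2.mem_mk_right c d'⟩
    rw [hea, hfc, Sym2.map_pair_eq, Sym2.map_pair_eq, Sym2.eq_iff] at hmap
    rcases hmap with ⟨hac, -⟩ | ⟨had, -⟩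
    · have c1 := hcl _ hva
      have c2 := hcl _ hvc
      have htri : dist (v a) (v c) ≤ dist (v a) (cl (v a)) + dist (v c) (cl (v c)) := by
        calc dist (v a) (v c) ≤ dist (v a) (cl (v a)) + dist (cl (v a)) (v c) :=
              dist_triangle _ _ _
          _ = dist (v a) (cl (v a)) + dist (v c) (cl (v c)) := by
              rw [hac, _root_.dist_comm (cl (v c)) (v c)]
      linarith [c1.2, c2.2]
    · have c1 := hcl _ hva
      have c2 := hcl _ hvd
      have htri : dist (v a) (v d') ≤ dist (v a) (cl (v a)) + dist (v d') (cl (v d')) := by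
        calc dist (v a) (v d') ≤ dist (v a) (cl (v a)) + dist (cl (v a)) (v d') :=
              dist_triangle _ _ _
          _ = dist (v a) (cl (v a)) + dist (v d') (cl (v d')) := by
              rw [had, _root_.dist_comm (cl (v d')) (v d')]
      linarith [c1.2, c2.2]
  calc S.card ≤ ((N ×ˢ N).image (fun p => s(p.1, p.2))).card :=
        Finset.card_le_card_of_injOn _ hmaps hinj
    _ ≤ (N ×ˢ N).card := Finset.card_image_le
    _ = N.card * N.card := Finset.card_product _ _
    _ ≤ 37 ^ d * 37 ^ d := Nat.mul_le_mul hNcard hNcard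

end Count

section SumBound

open Metric MeasureTheory
open scoped ENNReal Classical

variable {d n : ℕ} {v : Fin n → EuclideanSpace ℝ (Fin d)} {T : SimpleGraph (Fin n)}

private lemma sum_len_pow_le (hd : 1 ≤ d) (hv : ∀ j i, v j i ∈ Set.Icc (0:ℝ) 1)
    (hM : IsMST v T) :
    ∑ e ∈ T.edgeSet.toFinite.toFinset, (len v e) ^ d
      ≤ (32 * Real.sqrt d) ^ d * ((37:ℝ) ^ d * 37 ^ d) := by
  haveI := nontrivial_euclidean hd
  set E := T.edgeSet.toFinite.toFinset with hE
  have hd0 : (0:ℝ) < d := by exact_mod_cast Nat.lt_of_lt_of_le Nat.zero_lt_one hd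
  have hsqrt : 0 < Real.sqrt d := Real.sqrt_pos.mpr hd0
  have hlen_sqrt : ∀ e ∈ E, len v e ≤ Real.sqrt d := by
    intro e _
    induction e using Sym2.ind with | _ i j =>
    rw [len_mk]; exact dist_le_sqrt hd hv i j
  have hsub : ∀ e ∈ E, ball (emid v e) (len v e / 16)
      ⊆ ball (0 : EuclideanSpace ℝ (Fin d)) (2 * Real.sqrt d) := by
    intro e he y hy
    rw [Metric.mem_ball] at hy ⊢
    have h1 : dist y (0 : EuclideanSpace ℝ (Fin d))
        ≤ dist y (emid v e) + dist (emid v e) 0 := dist_triangle _ _ _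
    have h2 : dist (emid v e) (0 : EuclideanSpace ℝ (Fin d)) = ‖emid v e‖ :=
      dist_zero_right _
    have h3 := emid_norm_le hd hv e
    have h4 := hlen_sqrt e he
    linarith
  have hover := overlap_sum E (emid v) (fun e => len v e / 16) (37^d*37^d) 0
    (2*Real.sqrt d) hsub (fun x => overlap_count hd hM x)
  have hball : ∀ e ∈ E, volume (ball (emid v e) (len v e / 16))
      = ENNReal.ofReal ((len v e / 16) ^ d)
        * volume (ball (0 : EuclideanSpace ℝ (Fin d)) 1) := by
    intro e _
    have h0 : (0:ℝ) ≤ len v e / 16 := div_nonneg (len_nonneg v e) (by norm_num)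
    rw [Measure.addHaar_ball volume _ h0, finrank_euclideanSpace_fin]
  have hb2 : volume (ball (0 : EuclideanSpace ℝ (Fin d)) (2*Real.sqrt d))
      = ENNReal.ofReal ((2*Real.sqrt d)^d)
        * volume (ball (0 : EuclideanSpace ℝ (Fin d)) 1) := by
    rw [Measure.addHaar_ball volume _ (by positivity), finrank_euclideanSpace_fin]
  rw [Finset.sum_congr rfl hball, ← Finset.sum_mul, hb2, ← mul_assoc] at hover
  have hc0 : volume (ball (0 : EuclideanSpace ℝ (Fin d)) 1) ≠ 0 :=
    (measure_ball_pos volume _ one_pos).ne'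
  have hctop : volume (ball (0 : EuclideanSpace ℝ (Fin d)) 1) ≠ ⊤ :=
    measure_ball_lt_top.ne
  rw [ENNReal.mul_le_mul_iff_left hc0 hctop] at hover
  have hsum_eq : ∑ e ∈ E, ENNReal.ofReal ((len v e / 16) ^ d)
      = ENNReal.ofReal (∑ e ∈ E, (len v e / 16) ^ d) :=
    (ENNReal.ofReal_sum_of_nonneg (fun e _ => pow_nonneg (div_nonneg (len_nonneg v e) (by norm_num)) d)).symm
  have hKcast : ((37^d*37^d : ℕ) : ℝ≥0∞) * ENNReal.ofReal ((2*Real.sqrt d)^d)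
      = ENNReal.ofReal (((37^d*37^d : ℕ) : ℝ) * (2*Real.sqrt d)^d) := by
    rw [ENNReal.ofReal_mul (by positivity), ENNReal.ofReal_natCast]
  rw [hsum_eq, hKcast, ENNReal.ofReal_le_ofReal_iff (by positivity)] at hover
  have hfinal : ∑ e ∈ E, (len v e)^d
      ≤ 16^d * (((37^d*37^d : ℕ) : ℝ) * (2*Real.sqrt d)^d) := by
    have h16 : ∀ e ∈ E, (len v e)^d = 16^d * (len v e / 16)^d := by
      intro e _
      rw [div_pow]
      field_simp
    rw [Finset.sum_congr rfl h16, ← Finset.mul_sum]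
    exact mul_le_mul_of_nonneg_left hover (by positivity)
  have hrw : (16:ℝ)^d * (((37^d*37^d : ℕ) : ℝ) * (2*Real.sqrt d)^d)
      = (32*Real.sqrt d)^d * ((37:ℝ)^d * 37^d) := by
    push_cast
    rw [show (32:ℝ)*Real.sqrt d = 16*(2*Real.sqrt d) by ring,
      mul_pow (16:ℝ) (2*Real.sqrt d)]
    ring
  rw [hrw] at hfinal
  exact hfinal

end SumBound

section Final

open Metric
open scoped ENNReal Classical

private lemma edge_card {n : ℕ} {T : SimpleGraph (Fin n)} (hT : T.IsTree) :
    T.edgeSet.toFinite.toFinset.card + 1 = n := by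
  classical
  haveI : Fintype T.edgeSet := T.edgeSet.toFinite.fintype
  have h := hT.card_edgeFinset
  rw [Fintype.card_fin] at h
  have heq : T.edgeSet.toFinite.toFinset = T.edgeFinset := by
    ext e; rw [Set.Finite.mem_toFinset, mem_edgeFinset]
  rw [heq]
  exact h

/-- For every dimension `d ≥ 1` and every exponent `α > 0` there is a constant
`C = C(d) > 0` such that for all `n ≥ 1`, all points `v 0, …, v (n-1)` in the cube
`[0,1]^d` and every minimal spanning tree `T` over them,
`E_α(T) ≤ C^α * n^(max 0 (1 - α/d))`. -/
theorem mst_energy_bound (d : ℕ) (hd : 1 ≤ d) :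
    ∃ C : ℝ, 0 < C ∧ ∀ α : ℝ, 0 < α → ∀ n : ℕ, 1 ≤ n →
      ∀ v : Fin n → EuclideanSpace ℝ (Fin d), (∀ j i, v j i ∈ Set.Icc (0:ℝ) 1) →
      ∀ T : SimpleGraph (Fin n), IsMST v T →
        energy v T α ≤ C ^ α * (n : ℝ) ^ max (0:ℝ) (1 - α / d) := by
  classical
  set Kd : ℝ := (32 * Real.sqrt d) ^ d * ((37:ℝ) ^ d * 37 ^ d) with hKd
  set K' : ℝ := max Kd 1 with hK'
  have hK'1 : 1 ≤ K' := le_max_right _ _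
  have hK'0 : 0 < K' := lt_of_lt_of_le one_pos hK'1
  have hd0 : (0:ℝ) < d := by exact_mod_cast Nat.lt_of_lt_of_le Nat.zero_lt_one hd
  have hsqrt1 : 1 ≤ Real.sqrt d := by
    rw [show (1:ℝ) = Real.sqrt 1 by simp]
    exact Real.sqrt_le_sqrt (by exact_mod_cast hd)
  set C : ℝ := Real.sqrt d * K' ^ ((1:ℝ)/d) with hC
  have hC0 : 0 < C :=
    mul_pos (lt_of_lt_of_le one_pos hsqrt1) (Real.rpow_pos_of_pos hK'0 _)
  refine ⟨C, hC0, ?_⟩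
  intro α hα n hn v hv T hM
  rw [energy_eq]
  set E := T.edgeSet.toFinite.toFinset with hE
  have hlen_sqrt : ∀ e ∈ E, len v e ≤ Real.sqrt d := by
    intro e _
    induction e using Sym2.ind with | _ i j =>
    rw [len_mk]; exact dist_le_sqrt hd hv i j
  have hEd : ∑ e ∈ E, (len v e)^d ≤ K' :=
    le_trans (sum_len_pow_le hd hv hM) (le_max_left _ _)
  have hEd' : ∑ e ∈ E, (len v e)^(d:ℝ) ≤ K' := by
    rw [show ∑ e ∈ E, (len v e)^(d:ℝ) = ∑ e ∈ E, (len v e)^d from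
      Finset.sum_congr rfl fun e _ => Real.rpow_natCast _ d]
    exact hEd
  have hCα : C ^ α = Real.sqrt d ^ α * K' ^ (α/(d:ℝ)) := by
    rw [hC, Real.mul_rpow (by linarith) (Real.rpow_pos_of_pos hK'0 _).le,
      ← Real.rpow_mul hK'0.le]
    congr 1
    ring
  by_cases hcase : α ≤ (d:ℝ)
  · -- polynomial case
    have hθ : α / (d:ℝ) ≤ 1 := (div_le_one hd0).mpr hcase
    have hmax : max (0:ℝ) (1 - α/d) = 1 - α/d :=
      max_eq_right (by linarith)
    rw [hmax]
    rcases Finset.eq_empty_or_nonempty E with hEe | hEne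
    · rw [hEe, Finset.sum_empty]
      have h1 : (0:ℝ) < C ^ α := Real.rpow_pos_of_pos hC0 _
      have h2 : (0:ℝ) < (n:ℝ) ^ (1 - α/(d:ℝ)) :=
        Real.rpow_pos_of_pos (by exact_mod_cast hn) _
      exact le_of_lt (mul_pos h1 h2)
    · set m := E.card with hm
      have hm0 : 0 < m := Finset.card_pos.mpr hEne
      have hm0' : (0:ℝ) < m := by exact_mod_cast hm0
      have hmn : (m:ℝ) ≤ n := by
        have h : E.card + 1 = n := edge_card hM.1
        have : m ≤ n := by omega
        exact_mod_cast this
      have hp1 : 1 ≤ (d:ℝ)/α := (one_le_div hα).mpr hcase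
      have hH := Real.arith_mean_le_rpow_mean E (fun _ => 1/(m:ℝ))
        (fun e => (len v e)^α) (fun e _ => by positivity)
        (by rw [Finset.sum_const, nsmul_eq_mul, ← hm]; exact mul_one_div_cancel hm0'.ne')
        (fun e _ => Real.rpow_nonneg (len_nonneg v e) _) hp1
      have hz : ∀ e ∈ E, ((len v e)^α)^((d:ℝ)/α) = (len v e)^(d:ℝ) := by
        intro e _
        rw [← Real.rpow_mul (len_nonneg v e)]
        congr 1
        field_simp
      have hinner : ∑ e ∈ E, (1/(m:ℝ)) * ((len v e)^α)^((d:ℝ)/α)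
          ≤ (1/(m:ℝ)) * K' := by
        have hsum2 : ∑ e ∈ E, (1/(m:ℝ)) * ((len v e)^α)^((d:ℝ)/α)
            = (1/(m:ℝ)) * ∑ e ∈ E, (len v e)^(d:ℝ) := by
          rw [← Finset.mul_sum]
          congr 1
          exact Finset.sum_congr rfl hz
        rw [hsum2]
        exact mul_le_mul_of_nonneg_left hEd' (by positivity)
      have h1d : 1/((d:ℝ)/α) = α/(d:ℝ) := by field_simp
      have hmono : (∑ e ∈ E, (1/(m:ℝ)) * ((len v e)^α)^((d:ℝ)/α)) ^ (1/((d:ℝ)/α))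
          ≤ ((1/(m:ℝ)) * K') ^ (α/(d:ℝ)) := by
        rw [h1d]
        refine Real.rpow_le_rpow ?_ hinner (by positivity)
        exact Finset.sum_nonneg fun e _ => mul_nonneg (by positivity)
          (Real.rpow_nonneg (Real.rpow_nonneg (len_nonneg v e) α) ((d:ℝ)/α))
      have hmain : ∑ e ∈ E, (len v e)^α ≤ (m:ℝ) * ((1/(m:ℝ)) * K') ^ (α/(d:ℝ)) := by
        have h2 := le_trans hH hmono
        rw [← Finset.mul_sum] at h2
        calc ∑ e ∈ E, (len v e)^α = (m:ℝ) * ((1/(m:ℝ)) * ∑ e ∈ E, (len v e)^α) := by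
              field_simp
          _ ≤ (m:ℝ) * ((1/(m:ℝ)) * K') ^ (α/(d:ℝ)) :=
              mul_le_mul_of_nonneg_left h2 hm0'.le
      have hcomp : (m:ℝ) * ((1/(m:ℝ)) * K') ^ (α/(d:ℝ))
          = K' ^ (α/(d:ℝ)) * (m:ℝ) ^ (1 - α/(d:ℝ)) := by
        rw [show (1/(m:ℝ)) * K' = K'/(m:ℝ) by ring,
          Real.div_rpow hK'0.le hm0'.le,
          Real.rpow_sub hm0', Real.rpow_one]
        ring
      have hnn : (m:ℝ) ^ (1 - α/(d:ℝ)) ≤ (n:ℝ) ^ (1 - α/(d:ℝ)) :=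
        Real.rpow_le_rpow hm0'.le hmn (by linarith)
      have hKC : K' ^ (α/(d:ℝ)) ≤ C ^ α := by
        rw [hCα]
        have h1 : (1:ℝ) ≤ Real.sqrt d ^ α := Real.one_le_rpow hsqrt1 hα.le
        exact le_mul_of_one_le_left (Real.rpow_nonneg hK'0.le _) h1
      calc ∑ e ∈ E, (len v e)^α ≤ (m:ℝ) * ((1/(m:ℝ)) * K') ^ (α/(d:ℝ)) := hmain
        _ = K' ^ (α/(d:ℝ)) * (m:ℝ) ^ (1 - α/(d:ℝ)) := hcomp
        _ ≤ K' ^ (α/(d:ℝ)) * (n:ℝ) ^ (1 - α/(d:ℝ)) :=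
            mul_le_mul_of_nonneg_left hnn (Real.rpow_nonneg hK'0.le _)
        _ ≤ C ^ α * (n:ℝ) ^ (1 - α/(d:ℝ)) :=
            mul_le_mul_of_nonneg_right hKC (Real.rpow_nonneg (Nat.cast_nonneg n) _)
  · -- large α case
    push_neg at hcase
    have hmax : max (0:ℝ) (1 - α/d) = 0 := by
      refine max_eq_left ?_
      have : 1 ≤ α/(d:ℝ) := (one_le_div hd0).mpr hcase.le
      linarith
    rw [hmax, Real.rpow_zero, mul_one]
    have hper : ∀ e ∈ E, (len v e)^α ≤ (len v e)^(d:ℝ) * Real.sqrt d ^ (α - d) := by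
      intro e he
      rcases eq_or_lt_of_le (len_nonneg v e) with h0 | h0
      · rw [← h0, Real.zero_rpow hα.ne', Real.zero_rpow (by positivity : (d:ℝ) ≠ 0),
          zero_mul]
      · calc (len v e)^α = (len v e)^(d:ℝ) * (len v e)^(α - d) := by
              rw [← Real.rpow_add h0]; congr 1; ring
          _ ≤ (len v e)^(d:ℝ) * Real.sqrt d ^ (α - d) := by
              refine mul_le_mul_of_nonneg_left ?_ (Real.rpow_nonneg h0.le _)
              exact Real.rpow_le_rpow h0.le (hlen_sqrt e he) (by linarith)
    calc ∑ e ∈ E, (len v e)^α ≤ ∑ e ∈ E, (len v e)^(d:ℝ) * Real.sqrt d ^ (α - d) :=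
          Finset.sum_le_sum hper
      _ = (∑ e ∈ E, (len v e)^(d:ℝ)) * Real.sqrt d ^ (α - d) := by
          rw [Finset.sum_mul]
      _ ≤ K' * Real.sqrt d ^ (α - d) := by
          refine mul_le_mul_of_nonneg_right hEd' (Real.rpow_nonneg ?_ _)
          positivity
      _ ≤ C ^ α := by
          rw [hCα, mul_comm (Real.sqrt (d:ℝ) ^ α) (K' ^ (α/(d:ℝ)))]
          have h1 : Real.sqrt d ^ (α - d) ≤ Real.sqrt d ^ α :=
            Real.rpow_le_rpow_of_exponent_le hsqrt1 (by linarith)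
          have h2 : K' ≤ K' ^ (α/(d:ℝ)) := by
            nth_rewrite 1 [← Real.rpow_one K']
            exact Real.rpow_le_rpow_of_exponent_le hK'1 ((one_le_div hd0).mpr hcase.le)
          have h3 : (0:ℝ) ≤ Real.sqrt d ^ (α - d) := Real.rpow_nonneg (by positivity) _
          exact mul_le_mul h2 h1 h3 (Real.rpow_nonneg hK'0.le _)

end Final
end

section
/- Let v_1, …, v_n ∈ ℝ^d and let T be a spanning tree over v_1, …, v_n minimizing E_1(T) = Σ_{{i,j} ∈ E(T)} ‖v_i − v_j‖. For every edge e = {i,j} of T, let B_e be the open ball of radius (1/10)·‖v_i − v_j‖ centered at the midpoint (v_i + v_j)/2. Then the balls {B_e : e ∈ E(T)} corresponding to distinct edges of T are pairwise disjoint. -/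
open SimpleGraph

/-! ### Combinatorial lemmas about trees and edge swaps -/

lemma reach_side_aux {V : Type*} {T : SimpleGraph V} {x z : V} (p : T.Walk x z) :
    ∀ j : V, (T.deleteEdges {s(z,j)}).Reachable x z ∨ (T.deleteEdges {s(z,j)}).Reachable x j := by
  induction p with
  | nil => exact fun j => Or.inl (Reachable.refl _)
  | @cons a b c h q ih =>
    intro j
    by_cases he : s(a, b) = s(c, j)
    · rw [Sym2.eq_iff] at he
      rcases he with ⟨rfl, rfl⟩ | ⟨rfl, rfl⟩
      · exact Or.inl (Reachable.refl _)
      · exact Or.inr (Reachable.refl _)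
    · have hadj : (T.deleteEdges {s(c,j)}).Adj a b := by
        simp only [deleteEdges_adj, Set.mem_singleton_iff]
        exact ⟨h, he⟩
      rcases ih j with h1 | h1
      · exact Or.inl (hadj.reachable.trans h1)
      · exact Or.inr (hadj.reachable.trans h1)

/-- Every vertex is reachable to `i` or to `j` after deleting the edge `s(i,j)`. -/
lemma reach_side {V : Type*} {T : SimpleGraph V} {i j : V} (hc : T.Connected) (x : V) :
    (T.deleteEdges {s(i,j)}).Reachable x i ∨ (T.deleteEdges {s(i,j)}).Reachable x j := by
  obtain ⟨p⟩ := hc x i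
  exact reach_side_aux p j

lemma not_reach_swap {V : Type*} {T : SimpleGraph V} {i j x : V} (hT : T.IsTree)
    (hij : T.Adj i j) (hxi : (T.deleteEdges {s(i,j)}).Reachable x i) :
    ¬ (T.deleteEdges {s(i,j)}).Reachable j x := by
  have hb : T.IsBridge s(i, j) := isAcyclic_iff_forall_adj_isBridge.mp hT.IsAcyclic hij
  rw [isBridge_iff] at hb
  intro h
  exact hb ((h.trans hxi).symm)

/-- Swapping the edge `s(i,j)` of a tree for the edge `s(j,x)`, where `x` is on the
`i`-side, yields a tree. -/
lemma swap_isTree_s6 {V : Type*} {T : SimpleGraph V} {i j x : V} (hT : T.IsTree)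
    (hij : T.Adj i j) (hxi : (T.deleteEdges {s(i,j)}).Reachable x i) :
    ((T.deleteEdges {s(i,j)}) ⊔ fromEdgeSet {s(j,x)}).IsTree := by
  set G := T.deleteEdges {s(i,j)} with hG
  set T' := G ⊔ fromEdgeSet {s(j,x)} with hT'
  have hjx : ¬ G.Reachable j x := not_reach_swap hT hij hxi
  have hjxne : j ≠ x := by rintro rfl; exact hjx (Reachable.refl _)
  have hadjx : T'.Adj j x := by
    rw [hT', sup_adj, fromEdgeSet_adj]
    exact Or.inr ⟨rfl, hjxne⟩
  have key : ∀ u, T'.Reachable u i := by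
    intro u
    rcases reach_side (i := i) (j := j) hT.isConnected u with h | h
    · exact h.mono le_sup_left
    · exact (h.mono le_sup_left).trans (hadjx.reachable.trans (hxi.mono le_sup_left))
  constructor
  · haveI : Nonempty V := hT.isConnected.nonempty
    exact Connected.mk fun u w => (key u).trans (key w).symm
  · intro u c hc
    by_cases hm : s(j, x) ∈ c.edges
    · have h2 : (T' \ fromEdgeSet {s(j,x)}).Reachable j x :=
        (adj_and_reachable_delete_edges_iff_exists_cycle.mpr ⟨u, c, hc, hm⟩).2
      have hle : T' \ fromEdgeSet {s(j,x)} ≤ G := by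
        intro a b hab
        rw [sdiff_adj, hT', sup_adj] at hab
        rcases hab.1 with h | h
        · exact h
        · exact absurd h hab.2
      exact hjx (h2.mono hle)
    · have hsub : ∀ e ∈ c.edges, e ∈ T.edgeSet := by
        intro e he
        have h1 : e ∈ T'.edgeSet := c.edges_subset_edgeSet he
        rw [hT', edgeSet_sup, edgeSet_fromEdgeSet] at h1
        rcases h1 with h1 | h1
        · rw [hG, edgeSet_deleteEdges] at h1
          exact h1.1
        · have he' : e = s(j, x) := h1.1
          rw [he'] at he
          exact absurd he hm
      exact hT.IsAcyclic (c.transfer T hsub) (hc.transfer hsub)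

/-- The MST exchange inequality: for an edge `s(i,j)` of a minimal spanning tree and a
vertex `x` on the `i`-side of `T` minus this edge, the edge is no longer than `[v j, v x]`. -/
lemma exchange {X : Type*} [MetricSpace X] {n : ℕ} {v : Fin n → X} {T : SimpleGraph (Fin n)}
    (hT : IsMST v T) {i j x : Fin n} (hij : T.Adj i j)
    (hxi : (T.deleteEdges {s(i,j)}).Reachable x i) :
    dist (v i) (v j) ≤ dist (v j) (v x) := by
  classical
  set G := T.deleteEdges {s(i,j)} with hG
  set T' := G ⊔ fromEdgeSet {s(j,x)} with hT'
  have htree' : T'.IsTree := swap_isTree_s6 hT.1 hij hxi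
  have hjx : ¬ G.Reachable j x := not_reach_swap hT.1 hij hxi
  have hjxne : j ≠ x := by rintro rfl; exact hjx (Reachable.refl _)
  set f : Sym2 (Fin n) → ℝ :=
    Sym2.lift ⟨fun a b => dist (v a) (v b) ^ (1:ℝ),
      fun a b => by simp only [_root_.dist_comm]⟩ with hf
  have hfval : ∀ a b : Fin n, f s(a, b) = dist (v a) (v b) := by
    intro a b
    simp [hf, Real.rpow_one]
  have hset : T'.edgeSet.toFinite.toFinset
      = insert s(j,x) (T.edgeSet.toFinite.toFinset.erase s(i,j)) := by
    ext e
    simp only [Set.Finite.mem_toFinset, Finset.mem_insert, Finset.mem_erase,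
      Set.Finite.mem_toFinset, hT', edgeSet_sup, edgeSet_fromEdgeSet, hG, edgeSet_deleteEdges,
      Set.mem_union, Set.mem_diff, Set.mem_singleton_iff, Set.mem_setOf_eq, Sym2.mk_isDiag_iff]
    constructor
    · rintro (⟨h1, h2⟩ | ⟨h1, _⟩)
      · exact Or.inr ⟨h2, h1⟩
      · exact Or.inl h1
    · rintro (h1 | ⟨h1, h2⟩)
      · subst h1
        exact Or.inr ⟨rfl, by simp [hjxne]⟩
      · exact Or.inl ⟨h2, h1⟩
  have hnotmem : s(j,x) ∉ T.edgeSet.toFinite.toFinset.erase s(i,j) := by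
    simp only [Finset.mem_erase, Set.Finite.mem_toFinset, not_and]
    intro hne hmem
    rw [mem_edgeSet] at hmem
    have hadj : G.Adj j x := by
      rw [hG]
      simp only [deleteEdges_adj, Set.mem_singleton_iff]
      exact ⟨hmem, hne⟩
    exact hjx hadj.reachable
  have hmem : s(i,j) ∈ T.edgeSet.toFinite.toFinset := by
    simp only [Set.Finite.mem_toFinset, mem_edgeSet]; exact hij
  have hE' : energy v T' 1 = f s(j,x) + ∑ e ∈ T.edgeSet.toFinite.toFinset.erase s(i,j), f e := by
    rw [energy, hset, Finset.sum_insert hnotmem]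
  have hE : energy v T 1 = f s(i,j) + ∑ e ∈ T.edgeSet.toFinite.toFinset.erase s(i,j), f e := by
    rw [energy, ← Finset.add_sum_erase _ f hmem]
  have hle := hT.2 T' htree'
  rw [hE, hE'] at hle
  have : f s(i,j) ≤ f s(j,x) := by linarith
  rwa [hfval, hfval] at this

/-! ### Geometric lemmas -/

lemma half_norm_sub {E : Type*} [NormedAddCommGroup E] [NormedSpace ℝ E] (x y : E) :
    ‖x - (2:ℝ)⁻¹ • (x + y)‖ = ‖x - y‖ / 2 := by
  have h : x - (2:ℝ)⁻¹ • (x + y) = (2:ℝ)⁻¹ • (x - y) := by module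
  rw [h, norm_smul]
  simp [Real.norm_eq_abs, abs_of_nonneg]
  ring

lemma geom {E : Type*} [NormedAddCommGroup E] [InnerProductSpace ℝ E]
    {w y z c : E} {a : ℝ} (ha : 0 ≤ a) (hwc : ‖w - c‖ ≤ a / 2)
    (hwy : a ≤ ‖w - y‖) (hwz : a ≤ ‖w - z‖) (hyz : ‖y - z‖ ≤ a) :
    a / 10 + ‖y - z‖ / 10 ≤ dist c ((2:ℝ)⁻¹ • (y + z)) := by
  by_contra hcon
  push_neg at hcon
  set m := (2:ℝ)⁻¹ • (y + z) with hm
  have hsplit : w - m = (2:ℝ)⁻¹ • ((w - y) + (w - z)) := by rw [hm]; module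
  have hpar := parallelogram_law_with_norm ℝ (w - y) (w - z)
  have hsub : (w - y) - (w - z) = z - y := by abel
  rw [hsub] at hpar
  have hzy : ‖z - y‖ = ‖y - z‖ := norm_sub_rev _ _
  rw [hzy] at hpar
  have hnm : ‖w - m‖ = ‖(w - y) + (w - z)‖ / 2 := by
    rw [hsplit, norm_smul]
    simp [Real.norm_eq_abs]
    ring
  have htri : ‖w - m‖ ≤ ‖w - c‖ + dist c m := by
    rw [dist_eq_norm]
    calc ‖w - m‖ = ‖(w - c) + (c - m)‖ := by abel_nf
    _ ≤ ‖w - c‖ + ‖c - m‖ := norm_add_le _ _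
  have h0 : (0:ℝ) ≤ ‖(w - y) + (w - z)‖ := norm_nonneg _
  have hb0 : (0:ℝ) ≤ ‖y - z‖ := norm_nonneg _
  have h4 : ‖(w - y) + (w - z)‖ < 7 * a / 5 := by
    have := hnm ▸ htri
    nlinarith
  have h5 : ‖(w-y)+(w-z)‖ * ‖(w-y)+(w-z)‖ < (7*a/5) * (7*a/5) :=
    mul_self_lt_mul_self h0 h4
  have h6 : a * a ≤ ‖w - y‖ * ‖w - y‖ := mul_self_le_mul_self ha hwy
  have h7 : a * a ≤ ‖w - z‖ * ‖w - z‖ := mul_self_le_mul_self ha hwz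
  have h8 : ‖y - z‖ * ‖y - z‖ ≤ a * a := mul_self_le_mul_self hb0 hyz
  nlinarith

/-- The main statement, under the extra assumption that the second edge is no longer
than the first. -/
lemma mst_aux {d n : ℕ} (v : Fin n → EuclideanSpace ℝ (Fin d))
    (T : SimpleGraph (Fin n)) (hT : IsMST v T)
    (i j k l : Fin n) (hij : T.Adj i j) (hkl : T.Adj k l) (hne : s(i, j) ≠ s(k, l))
    (hord : dist (v k) (v l) ≤ dist (v i) (v j)) :
    Disjoint (Metric.ball ((2:ℝ)⁻¹ • (v i + v j)) (dist (v i) (v j) / 10))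
             (Metric.ball ((2:ℝ)⁻¹ • (v k + v l)) (dist (v k) (v l) / 10)) := by
  set G := T.deleteEdges {s(i,j)} with hG
  have hGkl : G.Adj k l := by
    rw [hG]
    simp only [deleteEdges_adj, Set.mem_singleton_iff]
    exact ⟨hkl, fun h => hne h.symm⟩
  have hmain : ∃ w : Fin n, ‖v w - (2:ℝ)⁻¹ • (v i + v j)‖ ≤ dist (v i) (v j) / 2 ∧
      dist (v i) (v j) ≤ dist (v w) (v k) ∧ dist (v i) (v j) ≤ dist (v w) (v l) := by
    rcases reach_side (i := i) (j := j) hT.1.isConnected k with hk | hk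
    · refine ⟨j, ?_, exchange hT hij hk, exchange hT hij (hGkl.symm.reachable.trans hk)⟩
      have h1 := half_norm_sub (v j) (v i)
      rw [add_comm (v j) (v i)] at h1
      rw [h1, dist_eq_norm, norm_sub_rev]
    · have hswap : ({s(j,i)} : Set (Sym2 (Fin n))) = {s(i,j)} := by rw [Sym2.eq_swap]
      have hk2 : (T.deleteEdges {s(j,i)}).Reachable k j := by rw [hswap]; exact hk
      have hl2 : (T.deleteEdges {s(j,i)}).Reachable l j := by
        rw [hswap]; exact hGkl.symm.reachable.trans hk
      have e1 := exchange hT hij.symm hk2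
      have e2 := exchange hT hij.symm hl2
      rw [dist_comm (v j) (v i)] at e1 e2
      refine ⟨i, ?_, e1, e2⟩
      rw [half_norm_sub (v i) (v j), dist_eq_norm]
  obtain ⟨w, hwc, hwk, hwl⟩ := hmain
  apply Metric.ball_disjoint_ball
  have hgeo := geom (w := v w) (y := v k) (z := v l) (c := (2:ℝ)⁻¹ • (v i + v j))
    dist_nonneg hwc (by rwa [← dist_eq_norm]) (by rwa [← dist_eq_norm])
    (by rwa [← dist_eq_norm])
  rwa [← dist_eq_norm] at hgeo

/-- Let `T` be a spanning tree over points `v 0, …, v (n-1)` of `ℝ^d` minimizing the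
total edge length. For each edge `{i, j}` of `T`, consider the open ball of radius
one-tenth the edge length `‖v i - v j‖` centered at the midpoint `(v i + v j)/2`. Then
the balls corresponding to distinct edges are pairwise disjoint. -/
theorem mst_midpoint_balls_disjoint {d n : ℕ} (v : Fin n → EuclideanSpace ℝ (Fin d))
    (T : SimpleGraph (Fin n)) (hT : IsMST v T)
    (i j k l : Fin n) (hij : T.Adj i j) (hkl : T.Adj k l) (hne : s(i, j) ≠ s(k, l)) :
    Disjoint (Metric.ball ((2:ℝ)⁻¹ • (v i + v j)) (dist (v i) (v j) / 10))
             (Metric.ball ((2:ℝ)⁻¹ • (v k + v l)) (dist (v k) (v l) / 10)) := by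
  rcases le_total (dist (v k) (v l)) (dist (v i) (v j)) with h | h
  · exact mst_aux v T hT i j k l hij hkl hne h
  · exact (mst_aux v T hT k l i j hkl hij (Ne.symm hne) h).symm
end

section
/- Let n ≥ 1 and let w : {1,…,n} × {1,…,n} → ℝ be a symmetric nonnegative edge-weight function on the complete graph on {1,…,n}. If a spanning tree T on {1,…,n} minimizes Σ_{{i,j} ∈ E(T)} w(i,j) among all trees on {1,…,n}, then for every α > 0 the tree T also minimizes Σ_{{i,j} ∈ E(T)} w(i,j)^α among all trees on {1,…,n}. -/
open SimpleGraph

section Aux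

variable {V : Type*}

/-- Crossing lemma: a path from inside `S` to outside `S` contains an edge crossing the
boundary, and moreover the two pieces of the path avoid that crossing edge. -/
lemma mst_cross_lemma {G : SimpleGraph V} {S : Set V} :
    ∀ {u v : V} (p : G.Walk u v), p.IsPath → u ∈ S → v ∉ S →
      ∃ x y, G.Adj x y ∧ x ∈ S ∧ y ∉ S ∧ x ∈ p.support ∧ y ∈ p.support ∧
        (G \ edge x y).Reachable u x ∧ (G \ edge x y).Reachable y v := by
  intro u v p
  induction p with
  | nil => intro _ hu hv; exact absurd hu hv
  | @cons u c v h q ih =>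
    intro hp hu hv
    rw [SimpleGraph.Walk.cons_isPath_iff] at hp
    by_cases hc : c ∈ S
    · obtain ⟨x, y, hxy, hxS, hyS, hxs, hys, hux, hyv⟩ := ih hp.1 hc hv
      have hne : ∀ z ∈ q.support, u ≠ z := fun z hz he => hp.2 (he ▸ hz)
      have hadj : (G \ edge x y).Adj u c := by
        rw [sdiff_adj, edge_adj]
        refine ⟨h, ?_⟩
        rintro ⟨⟨rfl, rfl⟩ | ⟨rfl, rfl⟩, -⟩
        · exact hne _ hxs rfl
        · exact hne _ hys rfl
      exact ⟨x, y, hxy, hxS, hyS, by simp [hxs], by simp [hys],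
        hadj.reachable.trans hux, hyv⟩
    · refine ⟨u, c, h, hu, hc, by simp, by simp, SimpleGraph.Reachable.refl u, ?_⟩
      have hq : ∀ e ∈ q.edges, e ∈ (G \ edge u c).edgeSet := by
        intro e he
        rw [edgeSet_sdiff, Set.mem_diff, edge_edgeSet_of_ne h.ne]
        refine ⟨q.edges_subset_edgeSet he, ?_⟩
        rintro rfl
        exact hp.2 (SimpleGraph.Walk.fst_mem_support_of_mem_edges q he)
      exact (q.transfer _ hq).reachable

/-- Stepping-back lemma used to prove the two-component dichotomy. -/
lemma mst_step_back {G : SimpleGraph V} {u v : V} :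
    ∀ {a b : V} (_ : G.Walk a b),
      ((G \ edge u v).Reachable u b ∨ (G \ edge u v).Reachable v b) →
      ((G \ edge u v).Reachable u a ∨ (G \ edge u v).Reachable v a) := by
  intro a b p
  induction p with
  | nil => exact id
  | @cons a c b h q ih =>
    intro hb
    by_cases he : (edge u v).Adj a c
    · rw [edge_adj] at he
      rcases he.1 with ⟨rfl, rfl⟩ | ⟨rfl, rfl⟩
      · exact Or.inl (SimpleGraph.Reachable.refl _)
      · exact Or.inr (SimpleGraph.Reachable.refl _)
    · have hadj : (G \ edge u v).Adj a c := by rw [sdiff_adj]; exact ⟨h, he⟩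
      rcases ih hb with hc | hc
      · exact Or.inl (hc.trans hadj.symm.reachable)
      · exact Or.inr (hc.trans hadj.symm.reachable)

/-- In a connected graph, after deleting the edge `uv` every vertex is still reachable
from `u` or from `v`. -/
lemma mst_dichotomy {G : SimpleGraph V} (hG : G.Connected) (u v z : V) :
    (G \ edge u v).Reachable u z ∨ (G \ edge u v).Reachable v z := by
  obtain ⟨p⟩ := hG.preconnected z u
  exact mst_step_back p (Or.inl (SimpleGraph.Reachable.refl u))

/-- In a tree, each edge is a bridge. -/
lemma mst_bridge {G : SimpleGraph V} (hG : G.IsTree) {u v : V} (h : G.Adj u v) :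
    ¬ (G \ edge u v).Reachable u v := by
  have hb : G.IsBridge s(u, v) :=
    (isAcyclic_iff_forall_adj_isBridge.mp hG.IsAcyclic) h
  rw [isBridge_iff] at hb
  exact hb

/-- The swap lemma: remove the edge `uv` from the tree `G` and add an edge `xy`
joining the two sides; the result is again a tree. -/
lemma mst_swap_isTree {G : SimpleGraph V} (hG : G.IsTree) {u v x y : V}
    (huv : G.Adj u v) (hnadj : ¬ G.Adj x y)
    (hux : (G \ edge u v).Reachable u x) (hvy : (G \ edge u v).Reachable v y) :
    ((G \ edge u v) ⊔ edge x y).IsTree := by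
  set G' := G \ edge u v with hG'
  have hbr : ¬ G'.Reachable u v := mst_bridge hG huv
  have hxyne : x ≠ y := by
    rintro rfl
    exact hbr (hux.trans hvy.symm)
  have hle : G' ≤ G' ⊔ edge x y := le_sup_left
  have hSadj : (G' ⊔ edge x y).Adj x y := by
    rw [sup_adj, edge_adj]; exact Or.inr ⟨Or.inl ⟨rfl, rfl⟩, hxyne⟩
  have huvS : (G' ⊔ edge x y).Reachable u v :=
    ((hux.mono hle).trans hSadj.reachable).trans (hvy.mono hle).symm
  have hreach : ∀ z, (G' ⊔ edge x y).Reachable u z := by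
    intro z
    rcases mst_dichotomy hG.isConnected u v z with hz | hz
    · exact hz.mono hle
    · exact huvS.trans (hz.mono hle)
  have hne : Nonempty V := ⟨u⟩
  constructor
  · exact SimpleGraph.Connected.mk fun a b => (hreach a).symm.trans (hreach b)
  · intro a c hc
    by_cases hmem : s(x, y) ∈ c.edges
    · -- the cycle uses the new edge, hence x and y were already connected in G'
      have hnb : ¬ (G' ⊔ edge x y).IsBridge s(x, y) := by
        rw [isBridge_iff_adj_and_forall_cycle_notMem]
        push_neg
        exact ⟨a, c, hc, hmem⟩
        exact hSadj
      rw [isBridge_iff] at hnb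
      push_neg at hnb
      have hreach' := hnb
      have hsub : (G' ⊔ edge x y) \ fromEdgeSet {s(x, y)} ≤ G' := by
        intro a b hab
        rw [sdiff_adj, sup_adj] at hab
        rcases hab with ⟨hab1 | hab1, hab2⟩
        · exact hab1
        · exact absurd hab1 hab2
      have : G'.Reachable x y := hreach'.mono hsub
      exact hbr ((hux.trans this).trans hvy.symm)
    · -- the cycle avoids the new edge, hence lives in G' ≤ G
      have hq : ∀ e ∈ c.edges, e ∈ G.edgeSet := by
        intro e he
        have h2 := c.edges_subset_edgeSet he
        rw [edgeSet_sup, Set.mem_union, edge_edgeSet_of_ne hxyne] at h2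
        rcases h2 with h1 | h1
        · rw [edgeSet_sdiff] at h1; exact h1.1
        · exact absurd (Set.mem_singleton_iff.mp h1 ▸ he) hmem
      exact hG.IsAcyclic (c.transfer G hq) (hc.transfer hq)

/-- The edge finset used throughout. -/
noncomputable def mstES {n : ℕ} (G : SimpleGraph (Fin n)) : Finset (Sym2 (Fin n)) :=
  G.edgeSet.toFinite.toFinset

lemma mem_mstES {n : ℕ} (G : SimpleGraph (Fin n)) (e : Sym2 (Fin n)) :
    e ∈ mstES G ↔ e ∈ G.edgeSet := Set.Finite.mem_toFinset _

/-- Edge finset of the swapped graph. -/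
lemma mst_swap_edgeFinset {n : ℕ} (G : SimpleGraph (Fin n)) {u v x y : Fin n}
    (huv : u ≠ v) (hxy : x ≠ y) :
    mstES ((G \ edge u v) ⊔ edge x y)
      = insert s(x, y) ((mstES G).erase s(u, v)) := by
  ext e
  simp only [mem_mstES, edgeSet_sup, edgeSet_sdiff, Set.mem_union, Set.mem_diff,
    edge_edgeSet_of_ne huv, edge_edgeSet_of_ne hxy, Set.mem_singleton_iff,
    Finset.mem_insert, Finset.mem_erase]
  constructor
  · rintro (⟨h1, h2⟩ | rfl)
    · exact Or.inr ⟨h2, h1⟩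
    · exact Or.inl rfl
  · rintro (rfl | ⟨h1, h2⟩)
    · exact Or.inr rfl
    · exact Or.inl ⟨h2, h1⟩

lemma mst_card_mstES {n : ℕ} (G : SimpleGraph (Fin n)) (hG : G.IsTree) :
    (mstES G).card + 1 = n := by
  classical
  have h1 : mstES G = G.edgeFinset := by
    ext e; simp [mem_mstES, mem_edgeFinset]
  rw [h1]
  simpa using hG.card_edgeFinset

end Aux

/-- Let `w` be a symmetric nonnegative edge-weight function on the complete graph on
`{1, …, n}`. If a spanning tree `T` minimizes the total weight `Σ_{e ∈ T} w(e)` among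
all trees on `{1, …, n}`, then for every `α > 0` it also minimizes the `α`-weight
`Σ_{e ∈ T} w(e)^α` among all such trees. -/
theorem mst_minimizes_all_powers {n : ℕ} (hn : 1 ≤ n) (w : Fin n → Fin n → ℝ)
    (hsymm : ∀ i j, w i j = w j i) (hnonneg : ∀ i j, 0 ≤ w i j)
    (T : SimpleGraph (Fin n)) (hT : T.IsTree)
    (hmin : ∀ T' : SimpleGraph (Fin n), T'.IsTree →
      ∑ e ∈ T.edgeSet.toFinite.toFinset, Sym2.lift ⟨fun i j => w i j, hsymm⟩ e ≤
      ∑ e ∈ T'.edgeSet.toFinite.toFinset, Sym2.lift ⟨fun i j => w i j, hsymm⟩ e)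
    (α : ℝ) (hα : 0 < α) :
    ∀ T' : SimpleGraph (Fin n), T'.IsTree →
      ∑ e ∈ T.edgeSet.toFinite.toFinset,
        Sym2.lift ⟨fun i j => w i j ^ α, fun i j => by simp only [hsymm i j]⟩ e ≤
      ∑ e ∈ T'.edgeSet.toFinite.toFinset,
        Sym2.lift ⟨fun i j => w i j ^ α, fun i j => by simp only [hsymm i j]⟩ e := by
  classical
  set f : Sym2 (Fin n) → ℝ := Sym2.lift ⟨fun i j => w i j, hsymm⟩ with hf
  set g : Sym2 (Fin n) → ℝ :=
    Sym2.lift ⟨fun i j => w i j ^ α, fun i j => by simp only [hsymm i j]⟩ with hg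
  -- sum over a swapped edge finset
  have hsum : ∀ (h : Sym2 (Fin n) → ℝ) (A : Finset (Sym2 (Fin n))) (a b : Sym2 (Fin n)),
      a ∉ A → b ∈ A → ∑ e ∈ insert a (A.erase b), h e = ∑ e ∈ A, h e + h a - h b := by
    intro h A a b ha hb
    rw [Finset.sum_insert (fun hmem => ha (Finset.mem_of_mem_erase hmem)),
      ← Finset.sum_erase_add A h hb]
    ring
  suffices H : ∀ k (T' : SimpleGraph (Fin n)), T'.IsTree →
      ((mstES T') \ (mstES T)).card = k →
      ∑ e ∈ mstES T, g e ≤ ∑ e ∈ mstES T', g e by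
    intro T' hT'
    exact H _ T' hT' rfl
  intro k
  induction k using Nat.strong_induction_on with
  | _ k ih =>
    intro T' hT' hk
    by_cases heq : mstES T' = mstES T
    · rw [heq]
    · -- find an edge of T missing from T'
      have hcard : (mstES T).card = (mstES T').card := by
        have h1 := mst_card_mstES T hT
        have h2 := mst_card_mstES T' hT'
        omega
      have hnsub : ¬ mstES T ⊆ mstES T' := by
        intro hsub
        exact heq (Finset.eq_of_subset_of_card_le hsub (le_of_eq hcard.symm)).symm
      obtain ⟨euv, heuvT, heuvT'⟩ := Finset.not_subset.mp hnsub
      revert heuvT heuvT'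
      induction euv using Sym2.ind with
      | _ u v =>
      intro heuvT heuvT'
      have hTuv : T.Adj u v := (mem_edgeSet T).mp ((mem_mstES T _).mp heuvT)
      have hT'uv : ¬ T'.Adj u v := fun h =>
        heuvT' ((mem_mstES T' _).mpr ((mem_edgeSet T').mpr h))
      -- the cut in T
      have hvS : v ∉ {z | (T \ edge u v).Reachable u z} := mst_bridge hT hTuv
      have huS : u ∈ {z | (T \ edge u v).Reachable u z} := SimpleGraph.Reachable.refl u
      -- a path from u to v in T', and its crossing edge
      obtain ⟨p⟩ := hT'.isConnected.preconnected u v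
      obtain ⟨x, y, hxy, hxS, hyS, -, -, hux', hyv'⟩ :=
        mst_cross_lemma p.toPath.1 p.toPath.2 huS hvS
      -- x y is not an edge of T
      have hsne : s(u, v) ≠ s(x, y) := by
        intro h
        exact hT'uv (by rwa [← mem_edgeSet, h, mem_edgeSet])
      have hnTxy : ¬ T.Adj x y := by
        intro h
        have hadj : (T \ edge u v).Adj x y := by
          rw [sdiff_adj, edge_adj]
          refine ⟨h, ?_⟩
          rintro ⟨⟨rfl, rfl⟩ | ⟨rfl, rfl⟩, -⟩
          · exact hsne rfl
          · exact hsne Sym2.eq_swap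
        exact hyS (hxS.trans hadj.reachable)
      -- y is on the v-side of the cut in T
      have hvy : (T \ edge u v).Reachable v y := by
        rcases mst_dichotomy hT.isConnected u v y with h | h
        · exact absurd h hyS
        · exact h
      -- the two swapped trees
      have hS1 : ((T \ edge u v) ⊔ edge x y).IsTree :=
        mst_swap_isTree hT hTuv hnTxy hxS hvy
      have hS2 : ((T' \ edge x y) ⊔ edge u v).IsTree :=
        mst_swap_isTree hT' hxy hT'uv hux'.symm hyv'
      have hES1 : mstES ((T \ edge u v) ⊔ edge x y)
          = insert s(x, y) ((mstES T).erase s(u, v)) :=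
        mst_swap_edgeFinset T hTuv.ne hxy.ne
      have hES2 : mstES ((T' \ edge x y) ⊔ edge u v)
          = insert s(u, v) ((mstES T').erase s(x, y)) :=
        mst_swap_edgeFinset T' hxy.ne hTuv.ne
      have hxyT : s(x, y) ∉ mstES T := fun h =>
        hnTxy ((mem_edgeSet T).mp ((mem_mstES T _).mp h))
      have hxyT' : s(x, y) ∈ mstES T' := (mem_mstES T' _).mpr ((mem_edgeSet T').mpr hxy)
      -- minimality gives w u v ≤ w x y
      have h1 : ∑ e ∈ mstES T, f e ≤ ∑ e ∈ mstES ((T \ edge u v) ⊔ edge x y), f e :=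
        hmin _ hS1
      rw [hES1, hsum f (mstES T) _ _ hxyT heuvT] at h1
      have hwle : f s(u, v) ≤ f s(x, y) := by linarith
      have hfg : g s(u, v) ≤ g s(x, y) := by
        simp only [hf, hg, Sym2.lift_mk] at hwle ⊢
        exact Real.rpow_le_rpow (hnonneg u v) hwle hα.le
      -- the measure decreases for the swapped tree S₂
      have hmes : ((mstES ((T' \ edge x y) ⊔ edge u v)) \ mstES T).card < k := by
        rw [hES2, Finset.insert_sdiff_of_mem _ heuvT, Finset.erase_sdiff_comm,
          Finset.card_erase_of_mem (Finset.mem_sdiff.mpr ⟨hxyT', hxyT⟩), hk]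
        have : 0 < ((mstES T') \ (mstES T)).card :=
          Finset.card_pos.mpr ⟨s(x, y), Finset.mem_sdiff.mpr ⟨hxyT', hxyT⟩⟩
        omega
      have h2 : ∑ e ∈ mstES T, g e ≤ ∑ e ∈ mstES ((T' \ edge x y) ⊔ edge u v), g e :=
        ih _ (hk ▸ hmes) _ hS2 rfl
      rw [hES2, hsum g (mstES T') _ _ heuvT' hxyT'] at h2
      linarith
end

section
/- Let M be a metric space, ε > 0, let v_1, …, v_n ∈ M, and let T be a minimal spanning tree over v_1, …, v_n. If T has k edges {i,j} with d(v_i, v_j) > ε, then there exist k points among v_1, …, v_n whose pairwise distances are all ≥ (2/3)·ε (equivalently, the balls of radius ε/3 around these k points are pairwise disjoint). In particular, the number of edges of T of length greater than ε is at most the maximal number of pairwise disjoint balls of radius ε/3 in M. -/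
open SimpleGraph

section Aux

variable {V : Type*} [DecidableEq V] {G : SimpleGraph V}

/-- For an edge `{a,b}` of a tree with chosen root paths, either the path from `a`
starts by going to `b`, or vice versa. -/
lemma tree_dichotomy (hG : G.IsTree) {r : V}
    (p : ∀ x, G.Walk x r) (hp : ∀ x, (p x).IsPath) {a b : V} (hab : G.Adj a b) :
    p a = Walk.cons hab (p b) ∨ p b = Walk.cons hab.symm (p a) := by
  by_cases ha : a ∈ (p b).support
  · right
    have hq : ((p b).dropUntil a ha).IsPath := (hp b).dropUntil ha
    have hpa : p a = (p b).dropUntil a ha := (hG.existsUnique_path a r).unique (hp a) hq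
    have hkey : ((p b).takeUntil a ha).support ++ ((p b).dropUntil a ha).support.tail
        = (p b).support := by
      rw [← Walk.support_append, Walk.take_spec]
    have hnodup := (hp b).support_nodup
    rw [← hkey] at hnodup
    have hdisj := List.disjoint_of_nodup_append hnodup
    have hbmem : b ∉ ((p b).dropUntil a ha).support := by
      intro hb
      rw [Walk.support_eq_cons ((p b).dropUntil a ha)] at hb
      rcases List.mem_cons.mp hb with h | h
      · exact hab.ne' h
      · exact hdisj (Walk.start_mem_support _) h
    have hpath : (Walk.cons hab.symm (p a)).IsPath := by
      rw [hpa]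
      exact hq.cons hbmem
    exact (hG.existsUnique_path b r).unique (hp b) hpath
  · left
    exact (hG.existsUnique_path a r).unique (hp a) ((hp b).cons ha)

/-- Length relation between a vertex's root path and that of its parent. -/
lemma depth_parent (hG : G.IsTree) {r : V} (p : ∀ x, G.Walk x r)
    (hp : ∀ x, (p x).IsPath) {x : V} (hx : ¬(p x).Nil) :
    (p ((p x).getVert 1)).length + 1 = (p x).length := by
  have h2 : (Walk.cons (Walk.adj_snd hx) (p x).tail).IsPath := by
    rw [(p x).cons_tail_eq hx]; exact hp x
  have htail : (p x).tail.IsPath := ((Walk.cons_isPath_iff _ _).mp h2).1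
  have he : p ((p x).getVert 1) = (p x).tail :=
    (hG.existsUnique_path _ r).unique (hp _) htail
  rw [he]
  exact Walk.length_tail_add_one hx

/-- Crossing an edge of the tree other than the parent edge of `c` preserves
(non)membership of `c` on the root path. -/
lemma below_closed (hG : G.IsTree) {r : V} (p : ∀ x, G.Walk x r)
    (hp : ∀ x, (p x).IsPath) {c x y : V} (hc : c ∈ (p x).support) (hxy : G.Adj x y)
    (hne : s(x, y) ≠ s(c, (p c).getVert 1)) : c ∈ (p y).support := by
  rcases tree_dichotomy hG p hp hxy with h | h
  · rw [h, Walk.support_cons] at hc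
    rcases List.mem_cons.mp hc with rfl | hc'
    · exfalso
      apply hne
      rw [h, Walk.getVert_cons_succ, Walk.getVert_zero]
    · exact hc'
  · rw [h, Walk.support_cons]
    exact List.mem_cons_of_mem _ hc

/-- Reachability in the tree minus the parent edge of `c` preserves membership of `c`
on root paths. -/
lemma reach_below (hG : G.IsTree) {r : V} (p : ∀ x, G.Walk x r)
    (hp : ∀ x, (p x).IsPath) {c x y : V}
    (hr : (G \ SimpleGraph.fromEdgeSet {s(c, (p c).getVert 1)}).Reachable x y)
    (hcx : c ∈ (p x).support) : c ∈ (p y).support := by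
  obtain ⟨w⟩ := hr
  induction w with
  | nil => exact hcx
  | cons hadj q ih =>
    apply ih
    obtain ⟨hG', hne⟩ := hadj
    refine below_closed hG p hp hcx hG' fun heq => hne ?_
    rw [SimpleGraph.fromEdgeSet_adj]
    exact ⟨Set.mem_singleton_iff.mpr heq, hG'.ne⟩

/-- If each of two vertices lies on the other's root path, they are equal. -/
lemma below_antisymm (hG : G.IsTree) {r : V} (p : ∀ x, G.Walk x r)
    (hp : ∀ x, (p x).IsPath) {c₁ c₂ : V} (h1 : c₂ ∈ (p c₁).support)
    (h2 : c₁ ∈ (p c₂).support) : c₁ = c₂ := by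
  have e1 : p c₂ = (p c₁).dropUntil c₂ h1 :=
    (hG.existsUnique_path c₂ r).unique (hp c₂) ((hp c₁).dropUntil h1)
  have e2 : p c₁ = (p c₂).dropUntil c₁ h2 :=
    (hG.existsUnique_path c₁ r).unique (hp c₁) ((hp c₂).dropUntil h2)
  have l1 : (p c₂).length ≤ (p c₁).length := by
    rw [e1]; exact Walk.length_dropUntil_le _ h1
  have l2 : (p c₁).length ≤ (p c₂).length := by
    rw [e2]; exact Walk.length_dropUntil_le _ h2
  have hspec := Walk.take_spec (p c₁) h1
  have hlen : ((p c₁).takeUntil c₂ h1).length = 0 := by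
    have hcongr := congrArg Walk.length hspec
    rw [Walk.length_append, ← e1] at hcongr
    omega
  exact Walk.eq_of_length_eq_zero hlen

/-- Exchange: removing a tree edge separating `x` from `y` and adding the edge `{x,y}`
yields a tree. -/
lemma exchange_isTree (hG : G.IsTree) {a b x y : V}
    (hab : G.Adj a b) (hxy : x ≠ y)
    (hnr : ¬(G \ SimpleGraph.fromEdgeSet {s(a, b)}).Reachable x y) :
    ((G \ SimpleGraph.fromEdgeSet {s(a, b)}) ⊔ SimpleGraph.fromEdgeSet {s(x, y)}).IsTree := by
  classical
  set D := G \ SimpleGraph.fromEdgeSet {s(a, b)} with hD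
  set H := D ⊔ SimpleGraph.fromEdgeSet {s(x, y)} with hH
  have hDH : D ≤ H := le_sup_left
  have hHxy : H.Adj x y := by
    rw [hH, sup_adj, SimpleGraph.fromEdgeSet_adj]
    exact Or.inr ⟨rfl, hxy⟩
  have claim1 : ∀ {u w : V}, G.Walk u w → (D.Reachable w a ∨ D.Reachable w b) →
      (D.Reachable u a ∨ D.Reachable u b) := by
    intro u w q
    induction q with
    | nil => exact id
    | @cons u' v' w' hadj q ih =>
      intro h
      have h' := ih h
      by_cases he : s(u', v') = s(a, b)
      · rcases Sym2.eq_iff.mp he with ⟨rfl, rfl⟩ | ⟨rfl, rfl⟩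
        · exact Or.inl (Reachable.refl _)
        · exact Or.inr (Reachable.refl _)
      · have hDadj : D.Adj u' v' := by
          rw [hD, sdiff_adj]
          exact ⟨hadj, fun hc => he ((SimpleGraph.fromEdgeSet_adj _).mp hc).1⟩
        rcases h' with h' | h'
        · exact Or.inl (hDadj.reachable.trans h')
        · exact Or.inr (hDadj.reachable.trans h')
  have claim1' : ∀ z : V, D.Reachable z a ∨ D.Reachable z b := fun z =>
    claim1 ((hG.isConnected.preconnected z a).some) (Or.inl (Reachable.refl _))
  have hreach_ab : H.Reachable a b := by
    rcases claim1' x with hx | hx <;> rcases claim1' y with hy | hy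
    · exact absurd (hx.trans hy.symm) hnr
    · exact (hx.mono hDH).symm.trans (hHxy.reachable.trans (hy.mono hDH))
    · exact (hy.mono hDH).symm.trans (hHxy.symm.reachable.trans (hx.mono hDH))
    · exact absurd (hx.trans hy.symm) hnr
  have hconn : H.Connected := by
    have hne : Nonempty V := hG.isConnected.nonempty
    have hu : ∀ z : V, H.Reachable z a := by
      intro z
      rcases claim1' z with h | h
      · exact h.mono hDH
      · exact (h.mono hDH).trans hreach_ab.symm
    exact Connected.mk fun u w => (hu u).trans (hu w).symm
  refine ⟨hconn, ?_⟩
  intro u c hc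
  by_cases he : s(x, y) ∈ c.edges
  · have hreach := (adj_and_reachable_delete_edges_iff_exists_cycle.mpr ⟨u, c, hc, he⟩).2
    apply hnr
    refine hreach.mono fun u' w' h' => ?_
    rw [deleteEdges_adj] at h'
    obtain ⟨h1, h2⟩ := h'
    rw [hH, sup_adj] at h1
    rcases h1 with h1 | h1
    · exact h1
    · exact absurd ((SimpleGraph.fromEdgeSet_adj _).mp h1).1 h2
  · have hsub : ∀ e ∈ c.edges, e ∈ G.edgeSet := by
      intro e hec
      have hmem := c.edges_subset_edgeSet hec
      rw [hH, edgeSet_sup, hD, edgeSet_sdiff, edgeSet_fromEdgeSet, edgeSet_fromEdgeSet] at hmem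
      rcases hmem with h' | h'
      · exact h'.1
      · exfalso
        apply he
        rw [← Set.mem_singleton_iff.mp h'.1]
        exact hec
    exact hG.2 (c.transfer G hsub) (hc.transfer hsub)

/-- The MST exchange inequality: if the tree edge `{a,b}` separates `x` from `y`,
then `dist (v a) (v b) ≤ dist (v x) (v y)`. -/
lemma exchange_dist_le {X : Type*} [MetricSpace X] {n : ℕ} (v : Fin n → X)
    {T : SimpleGraph (Fin n)} (hT : IsMST v T) {a b x y : Fin n} (hab : T.Adj a b)
    (hxy : x ≠ y)
    (hnr : ¬(T \ SimpleGraph.fromEdgeSet {s(a, b)}).Reachable x y) :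
    dist (v a) (v b) ≤ dist (v x) (v y) := by
  classical
  have htree := exchange_isTree hT.1 hab hxy hnr
  have hle := hT.2 ((T \ SimpleGraph.fromEdgeSet {s(a, b)}) ⊔
    SimpleGraph.fromEdgeSet {s(x, y)}) htree
  have hxyT : s(x, y) ∉ T.edgeSet \ {s(a, b)} := by
    rintro ⟨hmem, hne⟩
    apply hnr
    refine Adj.reachable ?_
    rw [sdiff_adj]
    exact ⟨hmem, fun hc => hne ((SimpleGraph.fromEdgeSet_adj _).mp hc).1⟩
  have hedge : ((T \ SimpleGraph.fromEdgeSet {s(a, b)}) ⊔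
      SimpleGraph.fromEdgeSet {s(x, y)}).edgeSet
      = (T.edgeSet \ {s(a, b)}) ∪ {s(x, y)} := by
    rw [edgeSet_sup, edgeSet_sdiff, edgeSet_fromEdgeSet, edgeSet_sdiff_sdiff_isDiag,
      edgeSet_fromEdgeSet]
    congr 1
    ext e
    simp only [Set.mem_diff, Set.mem_singleton_iff, Set.mem_setOf_eq]
    constructor
    · rintro ⟨h, -⟩; exact h
    · rintro rfl
      exact ⟨rfl, by simp [Sym2.mk_isDiag_iff, hxy]⟩
  have hA : s(a, b) ∈ T.edgeSet.toFinite.toFinset := by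
    rw [Set.Finite.mem_toFinset]; exact hab
  have hB : ((T \ SimpleGraph.fromEdgeSet {s(a, b)}) ⊔
      SimpleGraph.fromEdgeSet {s(x, y)}).edgeSet.toFinite.toFinset
      = insert s(x, y) (T.edgeSet.toFinite.toFinset.erase s(a, b)) := by
    ext e
    rw [Set.Finite.mem_toFinset, hedge]
    simp only [Set.mem_union, Set.mem_diff, Set.mem_singleton_iff, Finset.mem_insert,
      Finset.mem_erase, Set.Finite.mem_toFinset]
    tauto
  have hnotmem : s(x, y) ∉ T.edgeSet.toFinite.toFinset.erase s(a, b) := by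
    rw [Finset.mem_erase, Set.Finite.mem_toFinset]
    rintro ⟨h1, h2⟩
    exact hxyT ⟨h2, h1⟩
  unfold energy at hle
  rw [hB, Finset.sum_insert hnotmem, Finset.sum_erase_eq_sub hA] at hle
  simp only [Sym2.lift_mk, Real.rpow_one] at hle
  linarith

end Aux

/-- Let `T` be a minimal spanning tree over points `v 0, …, v (n-1)` of a metric space.
If `T` has `k` edges of length `> ε`, then there are `k` indices whose points are
pairwise at distance `≥ (2/3)·ε` (so the balls of radius `ε/3` around them are
pairwise disjoint); in particular the number of edges of `T` longer than `ε` is at most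
the maximal number of pairwise disjoint balls of radius `ε/3` in `M`. -/
theorem long_edges_give_separated_points {M : Type*} [MetricSpace M] {n : ℕ} (ε : ℝ)
    (hε : 0 < ε) (v : Fin n → M) (T : SimpleGraph (Fin n)) (hT : IsMST v T) :
    ∃ s : Finset (Fin n),
      s.card = ({e ∈ T.edgeSet |
          ε < Sym2.lift ⟨fun i j => dist (v i) (v j), fun i j => dist_comm (v i) (v j)⟩ e}
        ).toFinite.toFinset.card ∧
      ∀ i ∈ s, ∀ j ∈ s, i ≠ j → 2 / 3 * ε ≤ dist (v i) (v j) := by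
  classical
  obtain ⟨htree, hmin⟩ := hT
  have hne : Nonempty (Fin n) := htree.isConnected.nonempty
  obtain ⟨r⟩ := hne
  choose p hp hup using fun x => htree.existsUnique_path x r
  set s : Finset (Fin n) :=
    Finset.univ.filter (fun x => ¬(p x).Nil ∧ ε < dist (v x) (v ((p x).getVert 1))) with hs
  refine ⟨s, ?_, ?_⟩
  · refine Finset.card_bij (fun x _ => s(x, (p x).getVert 1)) ?_ ?_ ?_
    · intro x hx
      rw [hs, Finset.mem_filter] at hx
      obtain ⟨-, hnil, hdist⟩ := hx
      rw [Set.Finite.mem_toFinset, Set.mem_sep_iff]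
      exact ⟨Walk.adj_snd hnil, by simpa using hdist⟩
    · intro x₁ hx₁ x₂ hx₂ heq
      by_contra hne'
      rw [hs, Finset.mem_filter] at hx₁ hx₂
      rcases Sym2.eq_iff.mp heq with ⟨h1, h2⟩ | ⟨h1, h2⟩
      · exact hne' h1
      · have d1 := depth_parent htree p hp hx₁.2.1
        have d2 := depth_parent htree p hp hx₂.2.1
        rw [h2] at d1
        rw [← h1] at d2
        omega
    · intro e he
      rw [Set.Finite.mem_toFinset] at he
      revert he
      refine Sym2.ind (fun a b he => ?_) e
      rw [Set.mem_sep_iff] at he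
      obtain ⟨heT, hεe⟩ := he
      have hab : T.Adj a b := heT
      have hdd : ε < dist (v a) (v b) := by simpa using hεe
      rcases tree_dichotomy htree p hp hab with h | h
      · have hnil : ¬(p a).Nil := by rw [h]; simp
        have hpa : (p a).getVert 1 = b := by rw [h, Walk.getVert_cons_succ, Walk.getVert_zero]
        refine ⟨a, ?_, by show s(a, (p a).getVert 1) = s(a, b); rw [hpa]⟩
        rw [hs, Finset.mem_filter]
        exact ⟨Finset.mem_univ _, hnil, by rw [hpa]; exact hdd⟩
      · have hnil : ¬(p b).Nil := by rw [h]; simp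
        have hpb : (p b).getVert 1 = a := by rw [h, Walk.getVert_cons_succ, Walk.getVert_zero]
        refine ⟨b, ?_, by show s(b, (p b).getVert 1) = s(a, b); rw [hpb, Sym2.eq_swap]⟩
        rw [hs, Finset.mem_filter]
        refine ⟨Finset.mem_univ _, hnil, by rw [hpb, _root_.dist_comm]; exact hdd⟩
  · intro i hi j hj hij
    rw [hs, Finset.mem_filter] at hi hj
    obtain ⟨-, hni, hdi⟩ := hi
    obtain ⟨-, hnj, hdj⟩ := hj
    have key : ε < dist (v i) (v j) := by
      by_cases hij1 : (p i).getVert 1 = j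
      · rwa [hij1] at hdi
      by_cases hij2 : (p j).getVert 1 = i
      · rw [_root_.dist_comm]
        rwa [hij2] at hdj
      by_cases h1 : i ∈ (p j).support
      · have h2 : j ∉ (p i).support := fun h2 => hij (below_antisymm htree p hp h2 h1)
        have hnr : ¬(T \ SimpleGraph.fromEdgeSet {s(j, (p j).getVert 1)}).Reachable j i :=
          fun hr => h2 (reach_below htree p hp hr (Walk.start_mem_support _))
        have hexc := exchange_dist_le v ⟨htree, hmin⟩ (Walk.adj_snd hnj)
          (Ne.symm hij) hnr
        calc ε < dist (v j) (v ((p j).getVert 1)) := hdj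
        _ ≤ dist (v j) (v i) := hexc
        _ = dist (v i) (v j) := _root_.dist_comm _ _
      · have hnr : ¬(T \ SimpleGraph.fromEdgeSet {s(i, (p i).getVert 1)}).Reachable i j :=
          fun hr => h1 (reach_below htree p hp hr (Walk.start_mem_support _))
        have hexc := exchange_dist_le v ⟨htree, hmin⟩ (Walk.adj_snd hni) hij hnr
        exact lt_of_lt_of_le hdi hexc
    linarith
end
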